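/- arXiv:1504.00560 — 5 statements merged into one kernel-verified Lean document; each statement's English description precedes it below -/
import Mathlib

section
/- Let x : ℕ → ℂ be the constant sequence x_n = 1 for all n ≥ 0, so that G_x(λ) = 1/(λ − 1) for |λ| > 1. Then the function F : 𝕋∖{1} → ℂ, F(λ) = 1/(λ − 1), belongs to L¹_loc(𝕋∖{1}; ℂ) and is a boundary function for G_x, yet x_n does not tend to 0. (In particular, the hypothesis sup_{n≥0} ‖∑_{k=0}^{n} x_k‖ < ∞ cannot be dropped from the quantified Tauberian theorem.) -/
open MeasureTheory Filter Set

/-- `Gx x` is the holomorphic function on `{λ : |λ| > 1}` given by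
`Gx x λ = ∑_{n ≥ 0} x n / λ^(n+1)`. -/
noncomputable def Gx {X : Type*} [NormedAddCommGroup X] [NormedSpace ℂ X] (x : ℕ → X)
    (lam : ℂ) : X :=
  ∑' n : ℕ, (lam ^ (n + 1))⁻¹ • x n

/-- `ψ ∈ C₀(−π,π)`: continuous on `[−π,π]`, vanishing in a neighbourhood of `0`,
with `ψ(−π) = ψ(π)`. -/
def IsC0 (ψ : ℝ → ℂ) : Prop :=
  ContinuousOn ψ (Set.Icc (-Real.pi) Real.pi) ∧
    (∃ δ > 0, ∀ θ : ℝ, |θ| < δ → ψ θ = 0) ∧ ψ (-Real.pi) = ψ Real.pi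

/-- `F ∈ L¹_loc(𝕋∖{1}; X)`: for every `ψ ∈ C₀(−π,π)` the map
`θ ↦ ψ(θ) • F(e^{iθ})` is integrable on `(−π, π)`. -/
def MemL1loc {X : Type*} [NormedAddCommGroup X] [NormedSpace ℂ X] (F : ℂ → X) : Prop :=
  ∀ ψ : ℝ → ℂ, IsC0 ψ →
    IntervalIntegrable (fun θ : ℝ => ψ θ • F (Complex.exp (Complex.I * θ)))
      MeasureTheory.volume (-Real.pi) Real.pi

/-- `F` is a boundary function for `Gx x`:
`lim_{r→1+} ∫_{−π}^{π} ψ(θ) Gx x (r e^{iθ}) dθ = ∫_{−π}^{π} ψ(θ) F(e^{iθ}) dθ`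
for every `ψ ∈ C₀(−π,π)`. -/
def IsBoundaryFun {X : Type*} [NormedAddCommGroup X] [NormedSpace ℂ X] [CompleteSpace X]
    (x : ℕ → X) (F : ℂ → X) : Prop :=
  ∀ ψ : ℝ → ℂ, IsC0 ψ →
    Filter.Tendsto
      (fun r : ℝ =>
        ∫ θ in (-Real.pi)..Real.pi, ψ θ • Gx x ((r : ℂ) * Complex.exp (Complex.I * θ)))
      (nhdsWithin 1 (Set.Ioi 1))
      (nhds (∫ θ in (-Real.pi)..Real.pi, ψ θ • F (Complex.exp (Complex.I * θ))))

lemma normSq_aux (s θ : ℝ) :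
    Complex.normSq ((s : ℂ) * Complex.exp (Complex.I * θ) - 1)
      = s ^ 2 - 2 * s * Real.cos θ + 1 := by
  rw [mul_comm Complex.I, Complex.exp_mul_I]
  simp [Complex.normSq_apply, Complex.cos_ofReal_re, Complex.sin_ofReal_re,
    Complex.cos_ofReal_im, Complex.sin_ofReal_im]
  nlinarith [Real.sin_sq_add_cos_sq θ]

lemma abs_le_abs_aux {r : ℝ} (θ : ℝ) (hr : 1 ≤ r) :
    ‖Complex.exp (Complex.I * θ) - 1‖
      ≤ ‖(r : ℂ) * Complex.exp (Complex.I * θ) - 1‖ := by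
  rw [Complex.norm_def, Complex.norm_def]
  apply Real.sqrt_le_sqrt
  have h1 := normSq_aux 1 θ
  have hr' := normSq_aux r θ
  rw [Complex.ofReal_one, one_mul] at h1
  rw [h1, hr']
  nlinarith [Real.cos_le_one θ]

lemma abs_lower_aux {δ θ : ℝ} (hδ : 0 ≤ δ) (h1 : δ ≤ |θ|) (h2 : |θ| ≤ Real.pi) :
    Real.sqrt (2 - 2 * Real.cos δ) ≤ ‖Complex.exp (Complex.I * θ) - 1‖ := by
  rw [Complex.norm_def]
  apply Real.sqrt_le_sqrt
  have h := normSq_aux 1 θ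
  rw [Complex.ofReal_one, one_mul] at h
  rw [h]
  have hc : Real.cos θ ≤ Real.cos δ := by
    rw [← Real.cos_abs θ]
    exact Real.cos_le_cos_of_nonneg_of_le_pi hδ h2 h1
  nlinarith

lemma c_pos {δ : ℝ} (h0 : 0 < δ) (h1 : δ ≤ Real.pi) :
    0 < Real.sqrt (2 - 2 * Real.cos δ) := by
  apply Real.sqrt_pos.2
  have : Real.cos δ < Real.cos 0 := Real.cos_lt_cos_of_nonneg_of_le_pi le_rfl h1 h0
  rw [Real.cos_zero] at this
  linarith

lemma Gx_eq (lam : ℂ) (h : 1 < ‖lam‖) :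
    Gx (fun _ : ℕ => (1 : ℂ)) lam = (lam - 1)⁻¹ := by
  have hlam : lam ≠ 0 := by
    intro h0; rw [h0] at h; simp at h; linarith
  have hnorm : ‖lam⁻¹‖ < 1 := by
    rw [norm_inv]
    rw [inv_lt_one_iff₀]
    right; exact h
  have hne : (1 : ℂ) - lam⁻¹ ≠ 0 := by
    intro h0
    have : lam⁻¹ = 1 := by linear_combination -h0
    have : ‖(1 : ℂ)‖ < 1 := this ▸ hnorm
    simp at this
  unfold Gx
  have : ∀ n : ℕ, (lam ^ (n + 1))⁻¹ • (1 : ℂ) = lam⁻¹ * (lam⁻¹) ^ n := by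
    intro n
    rw [smul_eq_mul, mul_one, pow_succ, mul_inv, inv_pow, mul_comm]
  rw [tsum_congr this, tsum_mul_left, tsum_geometric_of_norm_lt_one hnorm]
  field_simp

lemma exp_ne_one_aux {θ : ℝ} (hθ : θ ≠ 0) (h2 : |θ| ≤ Real.pi) :
    Complex.exp (Complex.I * θ) ≠ 1 := by
  intro h
  have habs : (0 : ℝ) < |θ| := abs_pos.2 hθ
  have := abs_lower_aux (le_of_lt habs) le_rfl h2
  have hc := c_pos habs h2
  rw [Real.cos_abs] at hc
  rw [h] at this
  simp at this
  nlinarith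

/-- **Remark 2.2(a) of Seifert, first example.**  For the constant sequence `x_n = 1`
one has `Gx x (λ) = 1/(λ−1)` for `|λ| > 1`; the function `F(λ) = 1/(λ−1)` belongs to
`L¹_loc(𝕋∖{1}; ℂ)` and is a boundary function for `Gx x`, yet `x_n` does not tend
to `0`.  Hence the bounded-partial-sums hypothesis cannot be dropped from the
quantified Tauberian theorem. -/
theorem stmt_8 :
    (∀ lam : ℂ, 1 < ‖lam‖ → Gx (fun _ : ℕ => (1 : ℂ)) lam = (lam - 1)⁻¹) ∧
    MemL1loc (fun lam : ℂ => (lam - 1)⁻¹) ∧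
    IsBoundaryFun (fun _ : ℕ => (1 : ℂ)) (fun lam : ℂ => (lam - 1)⁻¹) ∧
    ¬ Filter.Tendsto (fun _ : ℕ => (1 : ℂ)) Filter.atTop (nhds 0) := by
  have hpi : (0 : ℝ) < Real.pi := Real.pi_pos
  refine ⟨fun lam h => Gx_eq lam h, ?_, ?_, ?_⟩
  · -- MemL1loc
    rintro ψ ⟨hcont, ⟨δ, hδ, hvan⟩, -⟩
    apply ContinuousOn.intervalIntegrable
    rw [uIcc_of_le (by linarith)]
    intro θ₀ hθ₀
    rcases lt_or_ge |θ₀| δ with hlt | hge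
    · -- near 0 : function is eventually 0
      apply ContinuousWithinAt.congr_of_eventuallyEq (f := fun _ => (0 : ℂ))
        continuousWithinAt_const
      · filter_upwards [eventually_nhdsWithin_of_eventually_nhds
          (eventually_abs_sub_lt θ₀ (by linarith [abs_nonneg θ₀] : (0:ℝ) < δ - |θ₀|))] with θ hθ
        have : |θ| < δ := by
          have := abs_sub_abs_le_abs_sub θ θ₀
          linarith
        simp [hvan θ this]
      · simp [hvan θ₀ hlt]
    · -- away from 0
      have hθne : θ₀ ≠ 0 := by
        intro h; rw [h] at hge; simp at hge; linarith
      have habs : |θ₀| ≤ Real.pi := abs_le.2 ⟨hθ₀.1, hθ₀.2⟩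
      have hne : Complex.exp (Complex.I * θ₀) - 1 ≠ 0 :=
        sub_ne_zero.2 (exp_ne_one_aux hθne habs)
      apply ContinuousWithinAt.smul (hcont θ₀ hθ₀)
      apply ContinuousAt.continuousWithinAt
      exact (((Complex.continuous_exp.comp
        (continuous_const.mul Complex.continuous_ofReal)).continuousAt).sub
        continuousAt_const).inv₀ hne
  · -- boundary function
    rintro ψ ⟨hcont, ⟨δ₀, hδ₀, hvan⟩, -⟩
    set δ : ℝ := min δ₀ Real.pi with hδdef
    have hδpos : 0 < δ := lt_min hδ₀ hpi
    have hδpi : δ ≤ Real.pi := min_le_right _ _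
    set c : ℝ := Real.sqrt (2 - 2 * Real.cos δ) with hc
    have hcpos : 0 < c := c_pos hδpos hδpi
    have hle : -Real.pi ≤ Real.pi := by linarith
    have hIoc : ∀ θ ∈ Set.Ioc (-Real.pi) Real.pi, |θ| ≤ Real.pi := fun θ hθ =>
      abs_le.2 ⟨le_of_lt hθ.1, hθ.2⟩
    -- rewrite both integrals over Ioc
    have key : Filter.Tendsto
        (fun r : ℝ => ∫ θ in Set.Ioc (-Real.pi) Real.pi,
          ψ θ • ((r : ℂ) * Complex.exp (Complex.I * θ) - 1)⁻¹)
        (nhdsWithin 1 (Set.Ioi 1))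
        (nhds (∫ θ in Set.Ioc (-Real.pi) Real.pi,
          ψ θ • (Complex.exp (Complex.I * θ) - 1)⁻¹)) := by
      apply MeasureTheory.tendsto_integral_filter_of_dominated_convergence
        (fun θ => ‖ψ θ‖ * c⁻¹)
      · -- measurability
        filter_upwards [self_mem_nhdsWithin] with r (hr : 1 < r)
        apply ContinuousOn.aestronglyMeasurable _ measurableSet_Ioc
        apply ContinuousOn.smul (hcont.mono Set.Ioc_subset_Icc_self)
        apply Continuous.continuousOn
        apply Continuous.inv₀
        · exact (continuous_const.mul (Complex.continuous_exp.comp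
            (continuous_const.mul Complex.continuous_ofReal))).sub continuous_const
        · intro θ h0
          have h1 : (r : ℂ) * Complex.exp (Complex.I * θ) = 1 := by
            linear_combination h0
          have habs2 : ‖(r:ℂ) * Complex.exp (Complex.I * θ)‖ = r := by
            rw [norm_mul, Complex.norm_real, Real.norm_eq_abs, abs_of_pos (by linarith)]
            rw [mul_comm Complex.I, Complex.norm_exp_ofReal_mul_I, mul_one]
          rw [h1] at habs2
          simp at habs2
          linarith
      · -- bound
        filter_upwards [self_mem_nhdsWithin] with r (hr : 1 < r)
        rw [MeasureTheory.ae_restrict_iff' measurableSet_Ioc]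
        filter_upwards with θ hθ
        rcases lt_or_ge |θ| δ with hlt | hge
        · rw [hvan θ (lt_of_lt_of_le hlt (min_le_left _ _))]
          simp only [zero_smul, norm_zero]
          positivity
        · have h1 : c ≤ ‖(r : ℂ) * Complex.exp (Complex.I * θ) - 1‖ :=
            le_trans (abs_lower_aux (le_of_lt hδpos) hge (hIoc θ hθ))
              (abs_le_abs_aux θ (le_of_lt hr))
          rw [norm_smul, norm_inv]
          apply mul_le_mul_of_nonneg_left _ (norm_nonneg _)
          exact inv_anti₀ hcpos h1
      · -- integrability of bound
        have : IntervalIntegrable (fun θ => ‖ψ θ‖ * c⁻¹) volume (-Real.pi) Real.pi := by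
          apply ContinuousOn.intervalIntegrable
          rw [uIcc_of_le hle]
          exact (hcont.norm.mul continuousOn_const)
        exact this.1
      · -- pointwise limit
        rw [MeasureTheory.ae_restrict_iff' measurableSet_Ioc]
        filter_upwards with θ hθ
        rcases lt_or_ge |θ| δ with hlt | hge
        · have h0 := hvan θ (lt_of_lt_of_le hlt (min_le_left _ _))
          simp only [h0, zero_smul]
          exact tendsto_const_nhds
        · have hne : ((1 : ℝ) : ℂ) * Complex.exp (Complex.I * θ) - 1 ≠ 0 := by
            rw [Complex.ofReal_one, one_mul]
            exact sub_ne_zero.2 (exp_ne_one_aux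
              (fun h => by rw [h] at hge; simp at hge; linarith) (hIoc θ hθ))
          have hca : ContinuousAt
              (fun r : ℝ => ψ θ • ((r : ℂ) * Complex.exp (Complex.I * θ) - 1)⁻¹) 1 := by
            refine ContinuousAt.smul (f := fun _ : ℝ => ψ θ) continuousAt_const ?_
            exact (((Complex.continuous_ofReal.continuousAt).mul
              continuousAt_const).sub continuousAt_const).inv₀ hne
          have h := hca.tendsto.mono_left
            (nhdsWithin_le_nhds (s := Set.Ioi (1:ℝ)))
          simpa using h
    have hGx : ∀ᶠ r : ℝ in nhdsWithin 1 (Set.Ioi 1),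
        (∫ θ in (-Real.pi)..Real.pi,
            ψ θ • Gx (fun _ : ℕ => (1 : ℂ)) ((r : ℂ) * Complex.exp (Complex.I * θ)))
          = ∫ θ in Set.Ioc (-Real.pi) Real.pi,
            ψ θ • ((r : ℂ) * Complex.exp (Complex.I * θ) - 1)⁻¹ := by
      filter_upwards [self_mem_nhdsWithin] with r (hr : 1 < r)
      rw [intervalIntegral.integral_of_le hle]
      apply MeasureTheory.setIntegral_congr_fun measurableSet_Ioc
      intro θ _
      have habs : 1 < ‖(r : ℂ) * Complex.exp (Complex.I * θ)‖ := by
        rw [norm_mul, Complex.norm_real, Real.norm_eq_abs, abs_of_pos (by linarith),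
          mul_comm Complex.I, Complex.norm_exp_ofReal_mul_I, mul_one]
        exact hr
      simp only [Gx_eq _ habs]
    rw [intervalIntegral.integral_of_le hle]
    exact Filter.Tendsto.congr' (Filter.EventuallyEq.symm hGx) key
  · -- x does not tend to 0
    intro h
    have h1 : Filter.Tendsto (fun _ : ℕ => (1 : ℂ)) Filter.atTop (nhds 1) :=
      tendsto_const_nhds
    have := tendsto_nhds_unique h h1
    exact one_ne_zero this.symm
end

section
/- Let x : ℕ → ℂ be the alternating sequence x_n = (−1)^n, so that sup_{n≥0} |∑_{k=0}^{n} x_k| ≤ 1 and G_x(λ) = 1/(λ + 1) for |λ| > 1. Then there exists no F ∈ L¹_loc(𝕋∖{1}; ℂ) which is a boundary function for G_x, and x_n does not tend to 0. (In particular, the boundary-function hypothesis cannot be dropped from the quantified Tauberian theorem.) -/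
open MeasureTheory Filter Set
open Topology

namespace Stmt9Aux

noncomputable def gg (t : ℝ) : ℝ := if 0 < t ∧ t < 1 then (1 - t) / (1 - Real.log t) else 0

lemma gg_of_mem {t : ℝ} (h0 : 0 < t) (h1 : t < 1) : gg t = (1 - t) / (1 - Real.log t) :=
  if_pos ⟨h0, h1⟩

lemma gg_of_nonpos {t : ℝ} (h : t ≤ 0) : gg t = 0 := if_neg (by push_neg; intro h'; linarith)

lemma gg_of_one_le {t : ℝ} (h : 1 ≤ t) : gg t = 0 := if_neg (by push_neg; intro h'; linarith)

lemma gg_nonneg (t : ℝ) : 0 ≤ gg t := by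
  unfold gg; split
  · next h =>
      have := Real.log_neg h.1 h.2
      apply div_nonneg <;> linarith
  · exact le_rfl

lemma gg_le_abs (t : ℝ) : gg t ≤ |1 - t| := by
  unfold gg; split
  · next h =>
      have hl := Real.log_neg h.1 h.2
      rw [abs_of_nonneg (by linarith : (0:ℝ) ≤ 1 - t), div_le_iff₀ (by linarith)]
      nlinarith
  · exact abs_nonneg _

lemma gg_cont : Continuous gg := by
  rw [continuous_iff_continuousAt]
  intro t
  rcases lt_trichotomy t 0 with h | h | h
  · apply continuousAt_const.congr
    filter_upwards [Iio_mem_nhds h] with s hs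
    exact (gg_of_nonpos (le_of_lt hs)).symm
  · subst h
    rw [← continuousWithinAt_compl_self]
    unfold ContinuousWithinAt
    rw [gg_of_nonpos le_rfl]
    have h1 : Tendsto (fun s : ℝ => Real.log |s|) (𝓝[≠] 0) atBot :=
      Real.tendsto_log_nhdsGT_zero.comp tendsto_abs_nhdsNE_zero
    have h2 : Tendsto (fun s : ℝ => 1 - Real.log |s|) (𝓝[≠] 0) atTop := by
      apply tendsto_atTop_add_const_left _ 1 (Filter.tendsto_neg_atBot_atTop.comp h1) |>.congr
      intro s; simp [sub_eq_add_neg]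
    have hb : Tendsto (fun s : ℝ => (1 - Real.log |s|)⁻¹) (𝓝[≠] 0) (𝓝 0) :=
      h2.inv_tendsto_atTop
    apply squeeze_zero' (Eventually.of_forall gg_nonneg) _ hb
    have hmem : Ioo (-1 : ℝ) 1 ∩ {(0:ℝ)}ᶜ ∈ 𝓝[≠] (0:ℝ) :=
      inter_mem (nhdsWithin_le_nhds (Ioo_mem_nhds (by norm_num) (by norm_num))) self_mem_nhdsWithin
    filter_upwards [hmem] with s hs
    obtain ⟨⟨hs1, hs2⟩, hs0⟩ := hs
    rcases lt_trichotomy s 0 with hneg | rfl | hpos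
    · rw [gg_of_nonpos hneg.le]
      have : Real.log |s| < 0 := Real.log_neg (abs_pos.2 hs0) (abs_lt.2 ⟨hs1, hs2⟩)
      have : (0:ℝ) < 1 - Real.log |s| := by linarith
      positivity
    · exact absurd rfl hs0
    · rw [gg_of_mem hpos hs2, abs_of_pos hpos]
      have hl := Real.log_neg hpos hs2
      rw [div_le_iff₀ (by linarith), inv_mul_eq_div, le_div_iff₀ (by linarith)]
      nlinarith
  · rcases lt_trichotomy t 1 with h1 | h1 | h1
    · have hform : ContinuousAt (fun s : ℝ => (1 - s) / (1 - Real.log s)) t := by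
        apply ContinuousAt.div
        · exact (continuous_const.sub continuous_id).continuousAt
        · exact continuousAt_const.sub (Real.continuousAt_log (ne_of_gt h))
        · have := Real.log_neg h h1; linarith
      apply hform.congr
      filter_upwards [Ioo_mem_nhds h h1] with s hs
      exact (gg_of_mem hs.1 hs.2).symm
    · subst h1
      have h0 : Tendsto (fun s : ℝ => |1 - s|) (𝓝 1) (𝓝 0) := by
        have : ContinuousAt (fun s : ℝ => |1 - s|) 1 :=
          ((continuous_const.sub continuous_id).abs).continuousAt
        have e : |1 - (1:ℝ)| = 0 := by norm_num
        rw [ContinuousAt, e] at this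
        exact this
      have := squeeze_zero gg_nonneg gg_le_abs h0
      unfold ContinuousAt
      rwa [gg_of_one_le le_rfl]
    · apply continuousAt_const.congr
      filter_upwards [Ioi_mem_nhds h1] with s hs
      exact (gg_of_one_le hs.le).symm

lemma Gx_eq (lam : ℂ) (h : 1 < ‖lam‖) :
    Gx (fun n : ℕ => ((-1 : ℂ)) ^ n) lam = (lam + 1)⁻¹ := by
  have h0 : lam ≠ 0 := by
    intro h0; rw [h0] at h; simp at h; linarith
  have hn : ‖(-lam⁻¹)‖ < 1 := by
    rw [norm_neg, norm_inv]
    rw [inv_lt_one_iff₀]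
    right; exact h
  have hterm : ∀ n : ℕ, ((lam ^ (n + 1))⁻¹ • ((-1 : ℂ)) ^ n) = (-lam⁻¹) ^ n * lam⁻¹ := by
    intro n
    rw [smul_eq_mul, ← inv_pow, neg_pow, pow_succ]
    ring
  unfold Gx
  rw [tsum_congr hterm, tsum_mul_right, tsum_geometric_of_norm_lt_one hn, sub_neg_eq_add]
  have h1 : (1 : ℂ) + lam⁻¹ ≠ 0 := by
    intro hz
    have h2 : lam⁻¹ = -1 := by linear_combination hz
    field_simp at h2
    have hlam : lam = -1 := by linear_combination h2
    rw [hlam] at h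
    simp at h
  rw [← mul_inv]
  congr 1
  field_simp

noncomputable def zz (r θ : ℝ) : ℂ := (r : ℂ) * Complex.exp (Complex.I * θ) + 1

lemma exp_I_mul (θ : ℝ) : Complex.exp (Complex.I * θ) = Complex.exp ((θ : ℂ) * Complex.I) := by
  rw [mul_comm]

lemma zz_re (r θ : ℝ) : (zz r θ).re = r * Real.cos θ + 1 := by
  simp [zz, exp_I_mul, Complex.add_re, Complex.mul_re, Complex.exp_ofReal_mul_I_re,
    Complex.exp_ofReal_mul_I_im]

lemma zz_im (r θ : ℝ) : (zz r θ).im = r * Real.sin θ := by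
  simp [zz, exp_I_mul, Complex.add_im, Complex.mul_im, Complex.exp_ofReal_mul_I_re,
    Complex.exp_ofReal_mul_I_im]

lemma normSq_zz (r θ : ℝ) : Complex.normSq (zz r θ) = r ^ 2 + 2 * r * Real.cos θ + 1 := by
  rw [Complex.normSq_apply, zz_re, zz_im]
  nlinarith [Real.sin_sq_add_cos_sq θ]

lemma normSq_zz_pos {r : ℝ} (h : 1 < r) (θ : ℝ) : 0 < Complex.normSq (zz r θ) := by
  rw [normSq_zz]
  nlinarith [Real.neg_one_le_cos θ]

lemma zz_ne {r : ℝ} (h : 1 < r) (θ : ℝ) : zz r θ ≠ 0 := by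
  intro h0
  have := normSq_zz_pos h θ
  rw [h0, map_zero] at this
  exact lt_irrefl _ this

lemma zz_cont (r : ℝ) : Continuous (zz r) := by
  unfold zz
  exact (continuous_const.mul (Complex.continuous_exp.comp
    (continuous_const.mul Complex.continuous_ofReal))).add continuous_const

lemma abs_r_exp {r : ℝ} (h : 1 < r) (θ : ℝ) :
    ‖(r : ℂ) * Complex.exp (Complex.I * θ)‖ = r := by
  rw [norm_mul, Complex.norm_real, Real.norm_eq_abs, exp_I_mul, Complex.norm_exp_ofReal_mul_I, mul_one,
    abs_of_pos (by linarith)]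

noncomputable def psi0 (θ : ℝ) : ℂ := ((gg (Real.pi - θ) : ℝ) : ℂ)

lemma psi0_cont : Continuous psi0 :=
  Complex.continuous_ofReal.comp (gg_cont.comp (continuous_const.sub continuous_id))

lemma psi0_isC0 : IsC0 psi0 := by
  refine ⟨psi0_cont.continuousOn, ⟨1, one_pos, fun θ hθ => ?_⟩, ?_⟩
  · have h3 := Real.pi_gt_three
    have := abs_lt.mp hθ
    have : (1 : ℝ) ≤ Real.pi - θ := by linarith
    simp [psi0, gg_of_one_le this]
  · have h3 := Real.pi_gt_three
    have h1 : (1 : ℝ) ≤ Real.pi - (-Real.pi) := by linarith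
    have e1 : psi0 (-Real.pi) = 0 := by
      simp only [psi0, sub_neg_eq_add, gg_of_one_le (by linarith : (1:ℝ) ≤ Real.pi + Real.pi)]
      norm_num
    have e2 : psi0 Real.pi = 0 := by
      simp only [psi0, sub_self, gg_of_nonpos le_rfl]
      norm_num
    rw [e1, e2]

noncomputable def ff (r θ : ℝ) : ℝ :=
  gg (Real.pi - θ) * (r * Real.sin θ) / Complex.normSq (zz r θ)

lemma im_integrand {r : ℝ} (θ : ℝ) : -(psi0 θ * (zz r θ)⁻¹).im = ff r θ := by
  unfold psi0 ff
  rw [Complex.im_ofReal_mul, Complex.inv_im, zz_im]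
  ring

lemma ff_cont {r : ℝ} (h : 1 < r) : Continuous (ff r) := by
  unfold ff
  apply Continuous.div
  · exact ((gg_cont.comp (continuous_const.sub continuous_id)).mul
      (continuous_const.mul Real.continuous_sin))
  · exact Complex.continuous_normSq.comp (zz_cont r)
  · exact fun θ => (normSq_zz_pos h θ).ne'

lemma ff_nonneg {r : ℝ} (h : 1 < r) {θ : ℝ} (hs : 0 ≤ Real.sin θ) : 0 ≤ ff r θ :=
  div_nonneg (mul_nonneg (gg_nonneg _) (mul_nonneg (by linarith) hs)) (normSq_zz_pos h θ).le

noncomputable def LL (θ : ℝ) : ℝ := (8 * ((Real.pi - θ) * (1 - Real.log (Real.pi - θ))))⁻¹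

noncomputable def HH (θ : ℝ) : ℝ := (1/8) * Real.log (1 - Real.log (Real.pi - θ))

lemma hasDerivAt_HH {θ : ℝ} (ht : 0 < Real.pi - θ) (ht1 : Real.pi - θ < 1) :
    HasDerivAt HH (LL θ) θ := by
  have hu : 0 < 1 - Real.log (Real.pi - θ) := by
    have := Real.log_neg ht ht1; linarith
  have h1 : HasDerivAt (fun x : ℝ => Real.pi - x) (-1) θ := by
    simpa using (hasDerivAt_id θ).const_sub Real.pi
  have h2 := (Real.hasDerivAt_log ht.ne').comp θ h1
  have h3 := h2.const_sub 1
  have h4 := (Real.hasDerivAt_log hu.ne').comp θ h3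
  have h5 := h4.const_mul (1/8 : ℝ)
  have : HasDerivAt HH ((1/8 : ℝ) * ((1 - Real.log (Real.pi - θ))⁻¹ *
      -((Real.pi - θ)⁻¹ * -1))) θ := h5
  convert this using 1
  unfold LL
  field_simp

lemma ff_lower {a r θ : ℝ} (ha0 : 0 < a) (ha : a ≤ 1/2) (hr1 : 1 < r) (hra : r ≤ 1 + a)
    (hθ : θ ∈ Icc (Real.pi - 1/2) (Real.pi - a)) : LL θ ≤ ff r θ := by
  obtain ⟨hθ1, hθ2⟩ := hθ
  set t := Real.pi - θ with htdef
  have hta : a ≤ t := by simp only [htdef]; linarith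
  have hth : t ≤ 1/2 := by simp only [htdef]; linarith
  have ht0 : 0 < t := lt_of_lt_of_le ha0 hta
  have ht1 : t < 1 := by linarith
  have hu : 0 < 1 - Real.log t := by have := Real.log_neg ht0 ht1; linarith
  have hθt : Real.pi - t = θ := by simp only [htdef]; ring
  clear_value t
  have hsin_eq : Real.sin θ = Real.sin t := by rw [← hθt, Real.sin_pi_sub]
  have hcos_eq : Real.cos θ = -Real.cos t := by rw [← hθt, Real.cos_pi_sub]
  have hsin_lb : (3/4) * t ≤ Real.sin t := by
    have h := Real.sin_gt_sub_cube ht0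
    have ht3 : t ^ 3 ≤ t := by
      nlinarith [mul_nonneg (mul_nonneg ht0.le (by linarith : (0:ℝ) ≤ 1 - t))
        (by linarith : (0:ℝ) ≤ 1 + t)]
    linarith
  have hsin_nonneg : 0 ≤ Real.sin θ := by rw [hsin_eq]; nlinarith
  have hD_pos := normSq_zz_pos hr1 θ
  have hD_ub : Complex.normSq (zz r θ) ≤ 3 * t ^ 2 := by
    rw [normSq_zz, hcos_eq]
    have hc := Real.one_sub_sq_div_two_le_cos (x := t)
    nlinarith
  have hgg : (2 * (1 - Real.log t))⁻¹ ≤ gg t := by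
    rw [gg_of_mem ht0 ht1, inv_eq_one_div, div_le_div_iff₀ (by positivity) hu]
    nlinarith
  have hnum : (2 * (1 - Real.log t))⁻¹ * ((3/4) * t) ≤ gg t * (r * Real.sin θ) := by
    apply mul_le_mul hgg ?_ (by positivity) (gg_nonneg t)
    rw [hsin_eq]; nlinarith
  have step1 : (2 * (1 - Real.log t))⁻¹ * ((3/4) * t) / (3 * t ^ 2) ≤ ff r θ := by
    unfold ff
    rw [← htdef]
    exact div_le_div₀ (mul_nonneg (gg_nonneg t) (by nlinarith)) hnum hD_pos hD_ub
  refine le_trans (le_of_eq ?_) step1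
  unfold LL
  rw [← htdef]
  field_simp
  ring

lemma im_integral_eq {r : ℝ} (hr1 : 1 < r) :
    -(∫ θ in (-Real.pi)..Real.pi,
        psi0 θ • Gx (fun n : ℕ => ((-1 : ℂ)) ^ n) ((r : ℂ) * Complex.exp (Complex.I * θ))).im
      = ∫ θ in (-Real.pi)..Real.pi, ff r θ := by
  have hfun : (fun θ : ℝ => psi0 θ • Gx (fun n : ℕ => ((-1 : ℂ)) ^ n)
      ((r : ℂ) * Complex.exp (Complex.I * θ))) = fun θ : ℝ => psi0 θ * (zz r θ)⁻¹ := by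
    funext θ
    rw [smul_eq_mul, Gx_eq _ (by rw [abs_r_exp hr1]; exact hr1)]
    rfl
  rw [hfun]
  have hint : IntervalIntegrable (fun θ : ℝ => psi0 θ * (zz r θ)⁻¹) volume
      (-Real.pi) Real.pi :=
    (psi0_cont.mul ((zz_cont r).inv₀ (zz_ne hr1))).intervalIntegrable _ _
  have him := Complex.imCLM.intervalIntegral_comp_comm hint
  have him' : (∫ θ in (-Real.pi)..Real.pi, (psi0 θ * (zz r θ)⁻¹).im)
      = (∫ θ in (-Real.pi)..Real.pi, psi0 θ * (zz r θ)⁻¹).im := him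
  rw [← him', ← intervalIntegral.integral_neg]
  apply intervalIntegral.integral_congr
  intro θ _
  exact im_integrand θ

lemma main_bound (M : ℝ) : ∀ᶠ r in 𝓝[>] (1 : ℝ),
    M ≤ ∫ θ in (-Real.pi)..Real.pi, ff r θ := by
  have hpi := Real.pi_gt_three
  set c : ℝ := 8 * (max M 0 + 1) + Real.log (1 - Real.log (1/2)) with hc
  have hlog2 : (0:ℝ) ≤ Real.log 2 := Real.log_nonneg one_le_two
  have hlog2' : Real.log 2 ≤ 1 := by
    have := Real.add_one_le_exp (1:ℝ)
    have h2e : (2:ℝ) ≤ Real.exp 1 := by linarith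
    calc Real.log 2 ≤ Real.log (Real.exp 1) := Real.log_le_log (by norm_num) h2e
    _ = 1 := Real.log_exp 1
  have hhalf : 1 - Real.log (1/2) = 1 + Real.log 2 := by
    rw [one_div, Real.log_inv]; ring
  have hlogc : 0 ≤ Real.log (1 - Real.log (1/2)) := by
    rw [hhalf]; exact Real.log_nonneg (by linarith)
  have hc8 : 8 ≤ c := by
    have : (1:ℝ) ≤ max M 0 + 1 := by
      have := le_max_right M 0; linarith
    rw [hc]; nlinarith
  have hec : (9:ℝ) ≤ Real.exp c := by
    have := Real.add_one_le_exp c; linarith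
  set a : ℝ := Real.exp (1 - Real.exp c) with hadef
  have ha0 : 0 < a := Real.exp_pos _
  have ha : a ≤ 1/2 := by
    have h1 : a ≤ Real.exp (-8) := Real.exp_le_exp.2 (by linarith)
    have h8 : (9:ℝ) ≤ Real.exp 8 := by
      have := Real.add_one_le_exp (8:ℝ); linarith
    have h2 : Real.exp (-8) ≤ 9⁻¹ := by
      rw [Real.exp_neg]
      exact inv_anti₀ (by norm_num) h8
    calc a ≤ Real.exp (-8) := h1
    _ ≤ 9⁻¹ := h2
    _ ≤ 1/2 := by norm_num
  have h1la : 1 - Real.log a = Real.exp c := by rw [hadef, Real.log_exp]; ring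
  have hHval : (1/8) * Real.log (1 - Real.log a) - (1/8) * Real.log (1 - Real.log (1/2))
      = max M 0 + 1 := by
    rw [h1la, Real.log_exp, hc]; ring
  filter_upwards [Ioc_mem_nhdsGT (show (1:ℝ) < 1 + a by linarith)] with r hr
  obtain ⟨hr1, hra⟩ := hr
  have hint : ∀ p q : ℝ, IntervalIntegrable (ff r) volume p q :=
    fun p q => ((ff_cont hr1).intervalIntegrable p q)
  -- the integral over [-π, π-1] vanishes
  have e0 : (∫ θ in (-Real.pi)..(Real.pi - 1), ff r θ) = 0 := by
    have heq : EqOn (ff r) (fun _ => (0:ℝ)) (uIcc (-Real.pi) (Real.pi - 1)) := by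
      intro θ hθ
      rw [uIcc_of_le (by linarith)] at hθ
      have : (1:ℝ) ≤ Real.pi - θ := by have := hθ.2; linarith
      simp [ff, gg_of_one_le this]
    rw [intervalIntegral.integral_congr heq]
    simp
  -- nonnegativity of ff on [π-1, π]
  have hnn : ∀ θ ∈ Icc (Real.pi - 1) Real.pi, 0 ≤ ff r θ := by
    intro θ hθ
    exact ff_nonneg hr1 (Real.sin_nonneg_of_nonneg_of_le_pi (by linarith [hθ.1]) hθ.2)
  -- splitting
  have hsplit1 : (∫ θ in (-Real.pi)..Real.pi, ff r θ)
      = (∫ θ in (-Real.pi)..(Real.pi - 1), ff r θ) + ∫ θ in (Real.pi - 1)..Real.pi, ff r θ :=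
    (intervalIntegral.integral_add_adjacent_intervals (hint _ _) (hint _ _)).symm
  have hsplit2 : (∫ θ in (Real.pi - 1)..Real.pi, ff r θ)
      = (∫ θ in (Real.pi - 1)..(Real.pi - 1/2), ff r θ)
        + ∫ θ in (Real.pi - 1/2)..Real.pi, ff r θ :=
    (intervalIntegral.integral_add_adjacent_intervals (hint _ _) (hint _ _)).symm
  have hsplit3 : (∫ θ in (Real.pi - 1/2)..Real.pi, ff r θ)
      = (∫ θ in (Real.pi - 1/2)..(Real.pi - a), ff r θ)
        + ∫ θ in (Real.pi - a)..Real.pi, ff r θ :=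
    (intervalIntegral.integral_add_adjacent_intervals (hint _ _) (hint _ _)).symm
  have hpos1 : 0 ≤ ∫ θ in (Real.pi - 1)..(Real.pi - 1/2), ff r θ :=
    intervalIntegral.integral_nonneg (by linarith)
      (fun u hu => hnn u ⟨hu.1, by linarith [hu.2]⟩)
  have hpos2 : 0 ≤ ∫ θ in (Real.pi - a)..Real.pi, ff r θ :=
    intervalIntegral.integral_nonneg (by linarith)
      (fun u hu => hnn u ⟨by linarith [hu.1], hu.2⟩)
  -- the middle integral dominates ∫ LL
  have hLLcont : ContinuousOn LL (uIcc (Real.pi - 1/2) (Real.pi - a)) := by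
    rw [uIcc_of_le (by linarith)]
    unfold LL
    apply ContinuousOn.inv₀
    · apply continuousOn_const.mul
      apply ContinuousOn.mul
      · exact (continuous_const.sub continuous_id).continuousOn
      · apply continuousOn_const.sub
        apply ContinuousOn.log
        · exact (continuous_const.sub continuous_id).continuousOn
        · intro θ hθ
          have : a ≤ Real.pi - θ := by linarith [hθ.2]
          linarith
    · intro θ hθ
      have ht0 : 0 < Real.pi - θ := by have := hθ.2; linarith
      have ht1 : Real.pi - θ < 1 := by have := hθ.1; linarith
      have := Real.log_neg ht0 ht1
      have : 0 < 1 - Real.log (Real.pi - θ) := by linarith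
      positivity
  have hLLint : IntervalIntegrable LL volume (Real.pi - 1/2) (Real.pi - a) :=
    hLLcont.intervalIntegrable
  have hmono : (∫ θ in (Real.pi - 1/2)..(Real.pi - a), LL θ)
      ≤ ∫ θ in (Real.pi - 1/2)..(Real.pi - a), ff r θ :=
    intervalIntegral.integral_mono_on (by linarith) hLLint (hint _ _)
      (fun θ hθ => ff_lower ha0 ha hr1 hra hθ)
  -- FTC
  have hFTC : (∫ θ in (Real.pi - 1/2)..(Real.pi - a), LL θ)
      = HH (Real.pi - a) - HH (Real.pi - 1/2) := by
    apply intervalIntegral.integral_eq_sub_of_hasDerivAt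
    · intro θ hθ
      rw [uIcc_of_le (by linarith)] at hθ
      exact hasDerivAt_HH (by linarith [hθ.2]) (by linarith [hθ.1])
    · exact hLLint
  have hHH : HH (Real.pi - a) - HH (Real.pi - 1/2) = max M 0 + 1 := by
    unfold HH
    rw [show Real.pi - (Real.pi - a) = a from by ring,
      show Real.pi - (Real.pi - 1/2) = 1/2 from by ring]
    exact hHval
  have : M ≤ max M 0 + 1 := by have := le_max_left M 0; linarith
  linarith

end Stmt9Aux

/-- **Remark 2.2(a) of Seifert, second example.**  For the alternating sequence
`x_n = (−1)^n` the partial sums are bounded by `1` and `Gx x (λ) = 1/(λ+1)` for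
`|λ| > 1`; nevertheless `Gx x` admits no boundary function in `L¹_loc(𝕋∖{1}; ℂ)`,
and `x_n` does not tend to `0`.  Hence the boundary-function hypothesis cannot be
dropped from the quantified Tauberian theorem. -/
theorem stmt_9 :
    (∀ n : ℕ, ‖∑ k ∈ Finset.range (n + 1), ((-1 : ℂ)) ^ k‖ ≤ 1) ∧
    (∀ lam : ℂ, 1 < ‖lam‖ →
      Gx (fun n : ℕ => ((-1 : ℂ)) ^ n) lam = (lam + 1)⁻¹) ∧
    (¬ ∃ F : ℂ → ℂ, MemL1loc F ∧ IsBoundaryFun (fun n : ℕ => ((-1 : ℂ)) ^ n) F) ∧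
    ¬ Filter.Tendsto (fun n : ℕ => ((-1 : ℂ)) ^ n) Filter.atTop (nhds 0) := by
  refine ⟨?_, ?_, ?_, ?_⟩
  · intro n
    rw [neg_one_geom_sum]
    split <;> simp
  · exact fun lam h => Stmt9Aux.Gx_eq lam h
  · rintro ⟨F, -, hB⟩
    have h := hB Stmt9Aux.psi0 Stmt9Aux.psi0_isC0
    have hneg : Filter.Tendsto
        (fun r : ℝ => -(∫ θ in (-Real.pi)..Real.pi, Stmt9Aux.psi0 θ •
          Gx (fun n : ℕ => ((-1 : ℂ)) ^ n) ((r : ℂ) * Complex.exp (Complex.I * θ))).im)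
        (nhdsWithin 1 (Set.Ioi 1))
        (nhds (-(∫ θ in (-Real.pi)..Real.pi,
          Stmt9Aux.psi0 θ • F (Complex.exp (Complex.I * θ))).im)) :=
      ((Complex.continuous_im.tendsto _).comp h).neg
    have hatTop : Filter.Tendsto
        (fun r : ℝ => -(∫ θ in (-Real.pi)..Real.pi, Stmt9Aux.psi0 θ •
          Gx (fun n : ℕ => ((-1 : ℂ)) ^ n) ((r : ℂ) * Complex.exp (Complex.I * θ))).im)
        (nhdsWithin 1 (Set.Ioi 1)) Filter.atTop := by
      rw [Filter.tendsto_atTop]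
      intro M
      filter_upwards [Stmt9Aux.main_bound M, self_mem_nhdsWithin] with r hrM hr1
      rw [Stmt9Aux.im_integral_eq hr1]
      exact hrM
    exact not_tendsto_atTop_of_tendsto_nhds hneg hatTop
  · intro h
    have hn : Filter.Tendsto (fun n : ℕ => ‖((-1 : ℂ)) ^ n‖) Filter.atTop (nhds 0) := by
      simpa using h.norm
    have he : (fun n : ℕ => ‖((-1 : ℂ)) ^ n‖) = fun _ => (1:ℝ) := by
      funext n; simp
    rw [he] at hn
    have := tendsto_nhds_unique hn tendsto_const_nhds
    norm_num at this
end

section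
/- Define φ : ℝ → ℝ by φ(0) = 0 and φ(t) = (2/π)((cos(2t) − cos(t))/t³ + (sin(2t) − (1/2)sin(t))/t²) for t ≠ 0. Then φ is continuous on ℝ and belongs to L¹(ℝ). Moreover, for ε ∈ (0,π/2], let y^ε ∈ ℓ¹(ℤ) be given by y_0^ε = 1 − 3ε/(2π) and y_n^ε = (cos(2nε) − cos(nε))/(ε π n²) for n ≠ 0, and let z^ε ∈ ℓ¹(ℤ) be given by z_0^ε = 1 − y_0^ε and z_n^ε = −y_n^ε for n ≠ 0. Then z_n^ε − z_{n−1}^ε = ε ∫_{ε(n−1)}^{ε n} φ(t) dt for all n ∈ ℤ. -/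
open MeasureTheory Filter Set

/-- The function `φ` from the proof of Theorem 2.1(b):
`φ(0) = 0` and `φ(t) = (2/π)((cos 2t − cos t)/t³ + (sin 2t − ½ sin t)/t²)` for `t ≠ 0`. -/
noncomputable def phiFn (t : ℝ) : ℝ :=
  if t = 0 then 0
  else (2 / Real.pi) * ((Real.cos (2 * t) - Real.cos t) / t ^ 3 +
    (Real.sin (2 * t) - (1 / 2) * Real.sin t) / t ^ 2)

/-- The explicit sequence `y^ε`: `y_0^ε = 1 − 3ε/(2π)` and
`y_n^ε = (cos(2nε) − cos(nε))/(ε π n²)` for `n ≠ 0`. -/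
noncomputable def ySeq (ε : ℝ) (n : ℤ) : ℝ :=
  if n = 0 then 1 - 3 * ε / (2 * Real.pi)
  else (Real.cos (2 * n * ε) - Real.cos (n * ε)) / (ε * Real.pi * (n : ℝ) ^ 2)

/-- The sequence `z^ε`: `z_0^ε = 1 − y_0^ε` and `z_n^ε = −y_n^ε` for `n ≠ 0`. -/
noncomputable def zSeq (ε : ℝ) (n : ℤ) : ℝ :=
  if n = 0 then 1 - ySeq ε 0 else -ySeq ε n

/-- The auxiliary antiderivative-like function `G`. -/
noncomputable def Gfn (t : ℝ) : ℝ :=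
  if t = 0 then -(3/2) else (Real.cos (2*t) - Real.cos t) / t^2

lemma N_bound {t : ℝ} (ht : |t| ≤ 1/2) :
    |Real.cos (2*t) - Real.cos t + t*(Real.sin (2*t) - (1/2)*Real.sin t)| ≤ 4 * t^4 := by
  have h1 : |t| ≤ 1 := ht.trans (by norm_num)
  have h2 : |2*t| ≤ 1 := by rw [abs_mul]; simp only [abs_two]; linarith
  have htp : (0:ℝ) ≤ t^4 := by positivity
  have ht4 : |t|^4 = t^4 := by rw [← abs_pow, abs_of_nonneg (by positivity)]
  have h2t4 : |2*t|^4 = 16 * t^4 := by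
    rw [abs_mul, mul_pow, abs_two, ← abs_pow, abs_of_nonneg (by positivity)]; norm_num
  have e2 : |Real.cos (2*t) - (1 - (2*t)^2/2)| ≤ t^4 := by
    have := Real.cos_bound h2; rw [h2t4] at this; linarith
  have e1 : |Real.cos t - (1 - t^2/2)| ≤ t^4 := by
    have := Real.cos_bound h1; rw [ht4] at this; linarith
  have f2 : |Real.sin (2*t) - (2*t - (2*t)^3/6)| ≤ t^4 := by
    have := Real.sin_bound h2
    have h5 : |2*t|^5 ≤ |2*t|^4 := by
      calc |2*t|^5 = |2*t|^4 * |2*t| := pow_succ _ _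
        _ ≤ |2*t|^4 * 1 := by gcongr
        _ = |2*t|^4 := mul_one _
    rw [h2t4] at h5; linarith
  have f1 : |Real.sin t - (t - t^3/6)| ≤ t^4 := by
    have := Real.sin_bound h1
    have h5 : |t|^5 ≤ |t|^4 := by
      calc |t|^5 = |t|^4 * |t| := pow_succ _ _
        _ ≤ |t|^4 * 1 := by gcongr
        _ = |t|^4 := mul_one _
    rw [ht4] at h5; linarith
  have f2' : |t * (Real.sin (2*t) - (2*t - (2*t)^3/6))| ≤ (1/2) * t^4 := by
    rw [abs_mul]
    have := mul_le_mul ht f2 (abs_nonneg _) (by norm_num : (0:ℝ) ≤ 1/2)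
    linarith
  have f1' : |(t/2) * (Real.sin t - (t - t^3/6))| ≤ (1/4) * t^4 := by
    rw [abs_mul, abs_div, abs_two]
    have := mul_le_mul (by linarith : |t|/2 ≤ 1/4) f1 (abs_nonneg _)
      (by norm_num : (0:ℝ) ≤ 1/4)
    linarith
  have hN : Real.cos (2*t) - Real.cos t + t*(Real.sin (2*t) - (1/2)*Real.sin t)
      = (Real.cos (2*t) - (1 - (2*t)^2/2)) - (Real.cos t - (1 - t^2/2))
        + t * (Real.sin (2*t) - (2*t - (2*t)^3/6))
        - (t/2) * (Real.sin t - (t - t^3/6)) - (5/4) * t^4 := by ring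
  rw [hN]
  rw [abs_le] at e2 e1 f2' f1' ⊢
  constructor <;> linarith [e2.1, e2.2, e1.1, e1.2, f2'.1, f2'.2, f1'.1, f1'.2]

lemma M_bound {t : ℝ} (ht : |t| ≤ 1/2) :
    |Real.cos (2*t) - Real.cos t + (3/2) * t^2| ≤ 2 * t^4 := by
  have h1 : |t| ≤ 1 := ht.trans (by norm_num)
  have h2 : |2*t| ≤ 1 := by rw [abs_mul]; simp only [abs_two]; linarith
  have htp : (0:ℝ) ≤ t^4 := by positivity
  have ht4 : |t|^4 = t^4 := by rw [← abs_pow, abs_of_nonneg (by positivity)]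
  have h2t4 : |2*t|^4 = 16 * t^4 := by
    rw [abs_mul, mul_pow, abs_two, ← abs_pow, abs_of_nonneg (by positivity)]; norm_num
  have e2 : |Real.cos (2*t) - (1 - (2*t)^2/2)| ≤ t^4 := by
    have := Real.cos_bound h2; rw [h2t4] at this; linarith
  have e1 : |Real.cos t - (1 - t^2/2)| ≤ t^4 := by
    have := Real.cos_bound h1; rw [ht4] at this; linarith
  have hM : Real.cos (2*t) - Real.cos t + (3/2) * t^2
      = (Real.cos (2*t) - (1 - (2*t)^2/2)) - (Real.cos t - (1 - t^2/2)) := by ring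
  rw [hM, abs_le] at *
  constructor <;> linarith [e2.1, e2.2, e1.1, e1.2]

lemma phi_small {t : ℝ} (ht : |t| ≤ 1/2) : |phiFn t| ≤ 3 * |t| := by
  rcases eq_or_ne t 0 with rfl | ht0
  · simp [phiFn]
  have htp : (0:ℝ) < |t| := abs_pos.mpr ht0
  have hpi : (0:ℝ) < Real.pi := Real.pi_pos
  have hphi : phiFn t = (2/Real.pi) *
      ((Real.cos (2*t) - Real.cos t + t*(Real.sin (2*t) - (1/2)*Real.sin t)) / t^3) := by
    simp only [phiFn, if_neg ht0]; field_simp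
  have hNb := N_bound ht
  have ht4 : t^4 = |t| * |t|^3 := by
    rw [show |t| * |t|^3 = |t|^4 from by ring, ← abs_pow,
      abs_of_nonneg (by positivity : (0:ℝ) ≤ t^4)]
  rw [hphi, abs_mul, abs_of_pos (by positivity : (0:ℝ) < 2/Real.pi), abs_div, abs_pow]
  have hb : |Real.cos (2*t) - Real.cos t + t*(Real.sin (2*t) - (1/2)*Real.sin t)| / |t|^3
      ≤ 4 * |t| := by
    rw [div_le_iff₀ (by positivity)]
    calc |Real.cos (2*t) - Real.cos t + t*(Real.sin (2*t) - (1/2)*Real.sin t)|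
        ≤ 4 * t^4 := hNb
      _ = 4 * |t| * |t|^3 := by rw [ht4]; ring
  have hpi3 : 2/Real.pi ≤ 2/3 := by
    rw [div_le_div_iff₀ hpi (by norm_num)]
    nlinarith [Real.pi_gt_three]
  calc (2/Real.pi) * (|Real.cos (2*t) - Real.cos t +
        t*(Real.sin (2*t) - (1/2)*Real.sin t)| / |t|^3)
      ≤ (2/3) * (4 * |t|) := mul_le_mul hpi3 hb (by positivity) (by norm_num)
    _ ≤ 3 * |t| := by linarith [abs_nonneg t]

lemma phi_bound (t : ℝ) : |phiFn t| ≤ 20 * (1 + t^2)⁻¹ := by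
  have hpi : (0:ℝ) < Real.pi := Real.pi_pos
  rcases le_or_gt |t| (1/2) with ht | ht
  · have h1 := phi_small ht
    have h2 : t^2 ≤ 1/4 := by nlinarith [abs_nonneg t, sq_abs t]
    calc |phiFn t| ≤ 3/2 := by nlinarith [abs_nonneg t]
      _ ≤ 20 * (1 + t^2)⁻¹ := by
          rw [← div_eq_mul_inv, le_div_iff₀ (by positivity)]
          nlinarith
  · have ht0 : t ≠ 0 := by
      intro h; rw [h, abs_zero] at ht; linarith
    have htp : (0:ℝ) < |t| := abs_pos.mpr ht0
    have hA : |Real.cos (2*t) - Real.cos t| ≤ 2 := by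
      have := abs_sub (Real.cos (2*t)) (Real.cos t)
      linarith [Real.abs_cos_le_one (2*t), Real.abs_cos_le_one t]
    have hB : |Real.sin (2*t) - (1/2) * Real.sin t| ≤ 3/2 := by
      have h := abs_sub (Real.sin (2*t)) ((1/2) * Real.sin t)
      rw [abs_mul, abs_of_pos (by norm_num : (0:ℝ) < 1/2)] at h
      linarith [Real.abs_sin_le_one (2*t), Real.abs_sin_le_one t]
    have ht2 : t^2 = |t|^2 := (sq_abs t).symm
    have hphi : |phiFn t| ≤ (2/Real.pi) * (2 / |t|^3 + (3/2) / |t|^2) := by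
      simp only [phiFn, if_neg ht0]
      rw [abs_mul, abs_of_pos (by positivity : (0:ℝ) < 2/Real.pi)]
      apply mul_le_mul_of_nonneg_left _ (by positivity)
      calc |(Real.cos (2*t) - Real.cos t) / t ^ 3 +
            (Real.sin (2*t) - (1/2)*Real.sin t) / t ^ 2|
          ≤ |(Real.cos (2*t) - Real.cos t) / t ^ 3| +
            |(Real.sin (2*t) - (1/2)*Real.sin t) / t ^ 2| := abs_add_le _ _
        _ ≤ 2 / |t|^3 + (3/2) / |t|^2 := by
            rw [abs_div, abs_div, abs_pow, abs_pow]
            gcongr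
    have hpi3 : 2/Real.pi ≤ 2/3 := by
      rw [div_le_div_iff₀ hpi (by norm_num)]
      nlinarith [Real.pi_gt_three]
    set u := |t| with hu
    have hu2 : (1:ℝ)/2 ≤ u := ht.le
    have hup : (0:ℝ) < u := htp
    have step1 : 2 / u^3 ≤ 4 / u^2 := by
      rw [div_le_div_iff₀ (by positivity) (by positivity)]
      nlinarith [mul_nonneg (by linarith : (0:ℝ) ≤ u - 1/2) (sq_nonneg u)]
    calc |phiFn t| ≤ (2/Real.pi) * (2 / u^3 + (3/2) / u^2) := hphi
      _ ≤ (2/3) * (4 / u^2 + (3/2) / u^2) := by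
          apply mul_le_mul hpi3 (by linarith) (by positivity) (by norm_num)
      _ = (11/3) / u^2 := by field_simp; ring
      _ ≤ 20 / (1 + u^2) := by
          rw [div_le_div_iff₀ (by positivity) (by positivity)]
          nlinarith [mul_nonneg (by linarith : (0:ℝ) ≤ u - 1/2)
            (by linarith : (0:ℝ) ≤ u + 1/2)]
      _ = 20 * (1 + u^2)⁻¹ := by rw [div_eq_mul_inv]
      _ = 20 * (1 + t^2)⁻¹ := by rw [ht2]

lemma phi_cont : Continuous phiFn := by
  rw [continuous_iff_continuousAt]
  intro t
  rcases eq_or_ne t 0 with rfl | ht0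
  · have h0 : phiFn 0 = 0 := by simp [phiFn]
    rw [ContinuousAt, h0]
    have hev : ∀ᶠ s in nhds (0:ℝ), ‖phiFn s‖ ≤ 3 * |s| := by
      filter_upwards [Metric.ball_mem_nhds (0:ℝ) (by norm_num : (0:ℝ) < 1/2)] with s hs
      have : |s| ≤ 1/2 := by
        rw [Metric.mem_ball, Real.dist_eq, sub_zero] at hs; linarith
      simpa [Real.norm_eq_abs] using phi_small this
    have hcon : Continuous (fun s : ℝ => 3 * |s|) := by continuity
    exact squeeze_zero_norm' hev (by simpa using hcon.tendsto' 0 0 (by simp))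
  · have hc : ContinuousAt (fun s : ℝ => (2 / Real.pi) *
        ((Real.cos (2 * s) - Real.cos s) / s ^ 3 +
        (Real.sin (2 * s) - (1 / 2) * Real.sin s) / s ^ 2)) t := by
      apply ContinuousAt.mul continuousAt_const
      apply ContinuousAt.add
      · exact (((Real.continuous_cos.comp (continuous_const.mul continuous_id)).sub
          Real.continuous_cos).continuousAt).div ((continuous_pow 3).continuousAt)
          (pow_ne_zero 3 ht0)
      · exact (((Real.continuous_sin.comp (continuous_const.mul continuous_id)).sub
          (continuous_const.mul Real.continuous_sin)).continuousAt).div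
          ((continuous_pow 2).continuousAt) (pow_ne_zero 2 ht0)
    apply hc.congr
    filter_upwards [eventually_ne_nhds ht0] with s hs
    simp only [phiFn, if_neg hs]

lemma Gfn_hasDeriv (t : ℝ) : HasDerivAt Gfn (-Real.pi * phiFn t) t := by
  have hpi : (0:ℝ) < Real.pi := Real.pi_pos
  rcases eq_or_ne t 0 with rfl | ht0
  · have h0 : -Real.pi * phiFn 0 = 0 := by simp [phiFn]
    rw [h0, hasDerivAt_iff_tendsto_slope]
    have hev : ∀ᶠ s in nhdsWithin (0:ℝ) {(0:ℝ)}ᶜ, ‖slope Gfn 0 s‖ ≤ 2 * |s| := by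
      have hmem : {s : ℝ | |s| ≤ 1/2} ∈ nhdsWithin (0:ℝ) {(0:ℝ)}ᶜ := by
        apply nhdsWithin_le_nhds
        filter_upwards [Metric.ball_mem_nhds (0:ℝ) (by norm_num : (0:ℝ) < 1/2)] with s hs
        rw [Metric.mem_ball, Real.dist_eq, sub_zero] at hs
        exact hs.le
      filter_upwards [hmem, self_mem_nhdsWithin] with s hs hs0
      have hs0' : s ≠ 0 := hs0
      have hsp : (0:ℝ) < |s| := abs_pos.mpr hs0'
      have hslope : slope Gfn 0 s =
          (Real.cos (2*s) - Real.cos s + (3/2) * s^2) / s^3 := by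
        rw [slope_def_field]
        simp only [Gfn, if_neg hs0', ↓reduceIte]
        field_simp
        ring
      rw [Real.norm_eq_abs, hslope, abs_div, abs_pow, div_le_iff₀ (by positivity)]
      calc |Real.cos (2*s) - Real.cos s + (3/2) * s^2| ≤ 2 * s^4 := M_bound hs
        _ = 2 * |s| * |s|^3 := by
            rw [show 2 * |s| * |s|^3 = 2 * |s|^4 from by ring, ← abs_pow,
              abs_of_nonneg (by positivity : (0:ℝ) ≤ s^4)]
    have hcon : Continuous (fun s : ℝ => 2 * |s|) := by continuity
    exact squeeze_zero_norm' hev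
      (((hcon.tendsto' 0 0 (by simp))).mono_left nhdsWithin_le_nhds)
  · have hu : HasDerivAt (fun s : ℝ => Real.cos (2*s) - Real.cos s)
        (-Real.sin (2*t) * 2 - (-Real.sin t)) t := by
      have h2s : HasDerivAt (fun s : ℝ => 2*s) 2 t := by
        simpa using (hasDerivAt_id t).const_mul (2:ℝ)
      exact (((Real.hasDerivAt_cos (2*t)).comp t h2s)).sub (Real.hasDerivAt_cos t)
    have hv : HasDerivAt (fun s : ℝ => s^2) (2*t) t := by
      simpa using hasDerivAt_pow 2 t
    have hdiv := hu.div hv (pow_ne_zero 2 ht0)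
    have heq : Gfn =ᶠ[nhds t] fun s => (Real.cos (2*s) - Real.cos s) / s^2 := by
      filter_upwards [eventually_ne_nhds ht0] with s hs
      simp only [Gfn, if_neg hs]
    apply HasDerivAt.congr_of_eventuallyEq _ heq
    refine hdiv.congr_deriv ?_
    simp only [phiFn, if_neg ht0]
    field_simp
    ring

/-- **Properties of `φ` (proof of Theorem 2.1(b) of Seifert).**  The function `φ` is
continuous and integrable on `ℝ`, the sequence `y^ε` is absolutely summable, and
`z_n^ε − z_{n−1}^ε = ε ∫_{ε(n−1)}^{εn} φ(t) dt` for all `n ∈ ℤ` and `ε ∈ (0, π/2]`. -/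
theorem stmt_11 :
    Continuous phiFn ∧ Integrable phiFn MeasureTheory.volume ∧
    ∀ ε ∈ Set.Ioc (0 : ℝ) (Real.pi / 2),
      Summable (fun n : ℤ => |ySeq ε n|) ∧
      ∀ n : ℤ, zSeq ε n - zSeq ε (n - 1) = ε * ∫ t in (ε * (n - 1))..(ε * n), phiFn t := by
  have hpi : (0:ℝ) < Real.pi := Real.pi_pos
  have hcont := phi_cont
  refine ⟨hcont, ?_, ?_⟩
  · apply Integrable.mono' (integrable_inv_one_add_sq.const_mul 20)
      hcont.aestronglyMeasurable
    exact ae_of_all _ fun t => by simpa [Real.norm_eq_abs] using phi_bound t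
  · rintro ε ⟨hε, hε2⟩
    constructor
    · apply Summable.of_norm_bounded_eventually (g := fun n : ℤ => (2/(ε*Real.pi)) * (1/(n:ℝ)^2))
      · exact ((Real.summable_one_div_int_pow (p := 2)).mpr one_lt_two).mul_left _
      · rw [eventually_cofinite]
        apply Set.Finite.subset (Set.finite_singleton (0:ℤ))
        intro n hn
        simp only [Set.mem_setOf_eq, not_le] at hn
        by_contra hne
        simp only [Set.mem_singleton_iff] at hne
        apply absurd hn
        push_neg
        have hn2 : (0:ℝ) < (n:ℝ)^2 := by
          have : ((n:ℝ)) ≠ 0 := Int.cast_ne_zero.mpr hne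
          positivity
        rw [Real.norm_eq_abs, abs_abs]
        simp only [ySeq, if_neg hne]
        rw [abs_div, abs_of_pos (by positivity : (0:ℝ) < ε * Real.pi * (n:ℝ)^2),
          div_le_iff₀ (by positivity)]
        have hA : |Real.cos (2*(n:ℝ)*ε) - Real.cos ((n:ℝ)*ε)| ≤ 2 := by
          have := abs_sub (Real.cos (2*(n:ℝ)*ε)) (Real.cos ((n:ℝ)*ε))
          linarith [Real.abs_cos_le_one (2*(n:ℝ)*ε), Real.abs_cos_le_one ((n:ℝ)*ε)]
        calc |Real.cos (2*(n:ℝ)*ε) - Real.cos ((n:ℝ)*ε)| ≤ 2 := hA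
          _ = 2/(ε*Real.pi) * (1/(n:ℝ)^2) * (ε*Real.pi*(n:ℝ)^2) := by
              field_simp
    · intro n
      have hz : ∀ m : ℤ, zSeq ε m = -(ε/Real.pi) * Gfn (ε * m) := by
        intro m
        rcases eq_or_ne m 0 with rfl | hm
        · simp only [zSeq, if_pos rfl, ySeq, Int.cast_zero, mul_zero, Gfn, ↓reduceIte]
          field_simp
          ring
        · have hm0 : ((m:ℝ)) ≠ 0 := Int.cast_ne_zero.mpr hm
          have hεm : ε * (m:ℝ) ≠ 0 := mul_ne_zero hε.ne' hm0
          simp only [zSeq, if_neg hm, ySeq, Gfn, if_neg hεm]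
          rw [show 2 * (ε * (m:ℝ)) = 2 * (m:ℝ) * ε by ring,
            show ε * (m:ℝ) = (m:ℝ) * ε from mul_comm _ _]
          field_simp
      have hFTC : ∫ t in (ε * ((n:ℝ) - 1))..(ε * n), phiFn t =
          (-(1/Real.pi)) * Gfn (ε * n) - (-(1/Real.pi)) * Gfn (ε * ((n:ℝ) - 1)) := by
        apply intervalIntegral.integral_eq_sub_of_hasDerivAt (f := fun s => -(1/Real.pi) * Gfn s)
        · intro x _
          have h := (Gfn_hasDeriv x).const_mul (-(1/Real.pi))
          refine h.congr_deriv ?_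
          field_simp
        · exact hcont.intervalIntegrable _ _
      rw [hFTC, hz n, hz (n-1)]
      push_cast
      ring
end

section
/- Let X be a complex Banach space, let x : ℕ → X be a bounded sequence, and suppose G_x admits a boundary function F_x ∈ L¹_loc(𝕋∖{1}; X). Let ψ ∈ C₀(−π,π) be such that its Fourier coefficient sequence c_m = (1/2π) ∫_{−π}^{π} e^{imθ} ψ(θ) dθ satisfies ∑_{m∈ℤ} |c_m| < ∞. Then for every n ∈ ℤ, ∑_{j≥0} x_j c_{n−j} = (1/2π) ∫_{−π}^{π} e^{i(n+1)θ} ψ(θ) F_x(e^{iθ}) dθ; consequently ∑_{j≥0} x_j c_{n−j} → 0 as |n| → ∞. -/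
open MeasureTheory Filter Set

open scoped FourierTransform

lemma exp_pi_symm (n : ℤ) :
    Complex.exp (Complex.I * ((n:ℂ)+1) * (-(Real.pi:ℂ))) =
    Complex.exp (Complex.I * ((n:ℂ)+1) * (Real.pi:ℂ)) := by
  refine Complex.exp_eq_exp_iff_exists_int.mpr ⟨-(n+1), ?_⟩
  push_cast
  ring

lemma isC0_mul {ψ : ℝ → ℂ} (hψ : IsC0 ψ) (n : ℤ) :
    IsC0 (fun θ : ℝ => Complex.exp (Complex.I * ((n:ℂ)+1) * (θ:ℂ)) * ψ θ) := by
  obtain ⟨hcont, ⟨δ, hδ, hzero⟩, hend⟩ := hψ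
  refine ⟨?_, ⟨δ, hδ, fun θ hθ => by simp only []; rw [hzero θ hθ, mul_zero]⟩, ?_⟩
  · exact (Complex.continuous_exp.comp (by continuity)).continuousOn.mul hcont
  · simp only
    rw [hend]
    congr 1
    rw [show ((-Real.pi : ℝ) : ℂ) = -(Real.pi:ℂ) by push_cast; ring]
    exact exp_pi_symm n


lemma geo_summable {r : ℝ} (hr : 1 < r) : Summable (fun j : ℕ => r⁻¹ ^ (j+1)) := by
  have h0 : 0 ≤ r⁻¹ := inv_nonneg.2 (by linarith)
  have h1 : r⁻¹ < 1 := inv_lt_one_of_one_lt₀ hr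
  simpa [pow_succ] using (summable_geometric_of_lt_one h0 h1).mul_right r⁻¹

lemma gx_summable {X : Type*} [NormedAddCommGroup X] [NormedSpace ℂ X] [CompleteSpace X]
    (x : ℕ → X) {C : ℝ} (hC : ∀ n, ‖x n‖ ≤ C) {lam : ℂ} (hlam : 1 < ‖lam‖) :
    Summable (fun j : ℕ => (lam ^ (j+1))⁻¹ • x j) := by
  refine Summable.of_norm_bounded (g := fun j : ℕ => C * ‖lam‖⁻¹ ^ (j+1))
    ((geo_summable hlam).mul_left C) fun j => ?_
  rw [norm_smul, norm_inv, norm_pow, ← inv_pow]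
  calc ‖lam‖⁻¹ ^ (j+1) * ‖x j‖ ≤ ‖lam‖⁻¹ ^ (j+1) * C :=
        mul_le_mul_of_nonneg_left (hC j) (pow_nonneg (inv_nonneg.2 (norm_nonneg _)) _)
    _ = C * ‖lam‖⁻¹ ^ (j+1) := mul_comm _ _

lemma gx_smul {X : Type*} [NormedAddCommGroup X] [NormedSpace ℂ X] [CompleteSpace X]
    (x : ℕ → X) {C : ℝ} (hC : ∀ n, ‖x n‖ ≤ C) {lam : ℂ} (hlam : 1 < ‖lam‖) (a : ℂ) :
    a • Gx x lam = ∑' j : ℕ, (a * (lam ^ (j+1))⁻¹) • x j := by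
  rw [Gx, ← Summable.tsum_const_smul a (gx_summable x hC hlam)]
  exact tsum_congr fun j => smul_smul a _ _

lemma norm_r_exp {r : ℝ} (hr : 0 < r) (θ : ℝ) : ‖(r:ℂ) * Complex.exp (Complex.I * θ)‖ = r := by
  rw [norm_mul]
  simp [Complex.norm_exp, abs_of_pos hr]

lemma hmain {X : Type*} [NormedAddCommGroup X] [NormedSpace ℂ X] [CompleteSpace X]
    (x : ℕ → X) {C : ℝ} (hC : ∀ n, ‖x n‖ ≤ C)
    {ψn : ℝ → ℂ} (hψn : IsC0 ψn) {M : ℝ}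
    (hM : ∀ θ ∈ Icc (-Real.pi) Real.pi, ‖ψn θ‖ ≤ M)
    (coef : ℕ → ℂ)
    (hcoef : ∀ j : ℕ, ∀ r : ℝ, 1 < r → (∫ θ in (-Real.pi)..Real.pi,
        ψn θ * (((r:ℂ) * Complex.exp (Complex.I * θ)) ^ (j+1))⁻¹) = ((r:ℂ) ^ (j+1))⁻¹ * coef j)
    {r : ℝ} (hr : 1 < r) :
    (∫ θ in (-Real.pi)..Real.pi, ψn θ • Gx x ((r:ℂ) * Complex.exp (Complex.I * θ)))
      = ∑' j : ℕ, (((r:ℂ) ^ (j+1))⁻¹ * coef j) • x j := by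
  have hC0 : 0 ≤ C := le_trans (norm_nonneg (x 0)) (hC 0)
  have hr0 : (0:ℝ) < r := by linarith
  have hππ : -Real.pi ≤ Real.pi := by linarith [Real.pi_pos]
  have hnorm : ∀ θ : ℝ, 1 < ‖(r:ℂ) * Complex.exp (Complex.I * θ)‖ := by
    intro θ; rw [norm_r_exp hr0]; exact hr
  have hne : ∀ θ : ℝ, ((r:ℂ) * Complex.exp (Complex.I * θ)) ≠ 0 := by
    intro θ
    intro h
    have := hnorm θ
    rw [h, norm_zero] at this
    linarith
  -- pointwise expansion
  have hpt : ∀ θ : ℝ, ψn θ • Gx x ((r:ℂ) * Complex.exp (Complex.I * θ))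
      = ∑' j : ℕ, (ψn θ * (((r:ℂ) * Complex.exp (Complex.I * θ)) ^ (j+1))⁻¹) • x j :=
    fun θ => gx_smul x hC (hnorm θ) (ψn θ)
  -- integrability of each term
  have hcont : ∀ j : ℕ, ContinuousOn
      (fun θ : ℝ => ψn θ * (((r:ℂ) * Complex.exp (Complex.I * θ)) ^ (j+1))⁻¹)
      (Icc (-Real.pi) Real.pi) := by
    intro j
    apply hψn.1.mul
    apply Continuous.continuousOn
    have hc1 : Continuous fun θ : ℝ => (r:ℂ) * Complex.exp (Complex.I * θ) := by continuity
    exact (hc1.pow (j+1)).inv₀ fun θ => pow_ne_zero _ (hne θ)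
  have hint : ∀ j : ℕ, IntegrableOn
      (fun θ : ℝ => (ψn θ * (((r:ℂ) * Complex.exp (Complex.I * θ)) ^ (j+1))⁻¹) • x j)
      (Ioc (-Real.pi) Real.pi) volume := fun j =>
    (((hcont j).integrableOn_Icc).mono_set Ioc_subset_Icc_self).smul_const (x j)
  have hM0 : 0 ≤ M := le_trans (norm_nonneg _) (hM Real.pi (right_mem_Icc.2 hππ))
  have hbound : ∀ j : ℕ, (∫ θ in Ioc (-Real.pi) Real.pi,
      ‖(ψn θ * (((r:ℂ) * Complex.exp (Complex.I * θ)) ^ (j+1))⁻¹) • x j‖)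
      ≤ (2 * Real.pi) * ((M * C) * r⁻¹ ^ (j+1)) := by
    intro j
    have hle : ∀ θ ∈ Ioc (-Real.pi) Real.pi,
        ‖(ψn θ * (((r:ℂ) * Complex.exp (Complex.I * θ)) ^ (j+1))⁻¹) • x j‖
        ≤ (M * C) * r⁻¹ ^ (j+1) := by
      intro θ hθ
      rw [norm_smul, norm_mul, norm_inv, norm_pow, norm_r_exp hr0, ← inv_pow]
      calc ‖ψn θ‖ * r⁻¹ ^ (j+1) * ‖x j‖ ≤ M * r⁻¹ ^ (j+1) * C := by
            apply mul_le_mul (mul_le_mul_of_nonneg_right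
              (hM θ (Ioc_subset_Icc_self hθ)) (pow_nonneg (inv_nonneg.2 hr0.le) _))
              (hC j) (norm_nonneg _) (mul_nonneg hM0 (pow_nonneg (inv_nonneg.2 hr0.le) _))
        _ = (M * C) * r⁻¹ ^ (j+1) := by ring
    calc (∫ θ in Ioc (-Real.pi) Real.pi,
        ‖(ψn θ * (((r:ℂ) * Complex.exp (Complex.I * θ)) ^ (j+1))⁻¹) • x j‖)
        ≤ ∫ _ in Ioc (-Real.pi) Real.pi, ((M * C) * r⁻¹ ^ (j+1)) :=
          setIntegral_mono_on ((hint j).norm)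
            (integrableOn_const measure_Ioc_lt_top.ne) measurableSet_Ioc hle
      _ = (2 * Real.pi) * ((M * C) * r⁻¹ ^ (j+1)) := by
          rw [setIntegral_const, Real.volume_real_Ioc_of_le hππ,
            smul_eq_mul]
          ring
  have hsum : Summable (fun j : ℕ => ∫ θ in Ioc (-Real.pi) Real.pi,
      ‖(ψn θ * (((r:ℂ) * Complex.exp (Complex.I * θ)) ^ (j+1))⁻¹) • x j‖) :=
    Summable.of_nonneg_of_le (fun j => integral_nonneg fun θ => norm_nonneg _) hbound
      (((geo_summable hr).mul_left (M * C)).mul_left (2 * Real.pi))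
  rw [intervalIntegral.integral_of_le hππ]
  simp only [hpt]
  rw [← MeasureTheory.integral_tsum_of_summable_integral_norm hint hsum]
  refine tsum_congr fun j => ?_
  rw [integral_smul_const, ← intervalIntegral.integral_of_le hππ, hcoef j r hr]

lemma hlimit {X : Type*} [NormedAddCommGroup X] [NormedSpace ℂ X] [CompleteSpace X]
    (x : ℕ → X) {C : ℝ} (hC : ∀ n, ‖x n‖ ≤ C)
    (coef : ℕ → ℂ) (hcoefsum : Summable fun j => ‖coef j‖) :
    Tendsto (fun r : ℝ => ∑' j : ℕ, (((r:ℂ) ^ (j+1))⁻¹ * coef j) • x j)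
      (nhdsWithin 1 (Set.Ioi 1)) (nhds (∑' j : ℕ, coef j • x j)) := by
  apply tendsto_tsum_of_dominated_convergence (bound := fun j => ‖coef j‖ * C)
    (hcoefsum.mul_right C)
  · intro j
    have h : Tendsto (fun r : ℝ => ((r:ℂ))) (nhdsWithin 1 (Set.Ioi 1)) (nhds (1:ℂ)) := by
      have h0 := Complex.continuous_ofReal.tendsto (1:ℝ)
      rw [Complex.ofReal_one] at h0
      exact h0.mono_left nhdsWithin_le_nhds
    have h2 := (((h.pow (j+1)).inv₀ (by simp)).mul_const (coef j)).smul_const (x j)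
    simpa using h2
  · filter_upwards [self_mem_nhdsWithin] with r hr
    intro j
    have hr1 : (1:ℝ) < r := hr
    rw [norm_smul, norm_mul, norm_inv, norm_pow, Complex.norm_real]
    have h1 : (‖r‖ ^ (j+1))⁻¹ ≤ 1 := by
      apply inv_le_one_of_one_le₀
      apply one_le_pow₀
      rw [Real.norm_eq_abs, abs_of_pos (by linarith)]
      linarith
    calc (‖r‖ ^ (j+1))⁻¹ * ‖coef j‖ * ‖x j‖ ≤ 1 * ‖coef j‖ * C := by
          apply mul_le_mul (mul_le_mul_of_nonneg_right h1 (norm_nonneg _)) (hC j)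
            (norm_nonneg _) (by positivity)
      _ = ‖coef j‖ * C := by rw [one_mul]

lemma key {X : Type*} [NormedAddCommGroup X] [NormedSpace ℂ X] [CompleteSpace X]
    (x : ℕ → X) {C : ℝ} (hC : ∀ n, ‖x n‖ ≤ C)
    (F : ℂ → X) (hFb : IsBoundaryFun x F)
    (ψ : ℝ → ℂ) (hψ : IsC0 ψ) (c : ℤ → ℂ)
    (hc : ∀ m : ℤ, c m =
      (1 / (2 * Real.pi)) * ∫ θ in (-Real.pi)..Real.pi, Complex.exp (Complex.I * m * θ) * ψ θ)
    (hc_sum : Summable (fun m : ℤ => ‖c m‖)) (n : ℤ) :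
    ∑' j : ℕ, c (n - (j : ℤ)) • x j =
      ((1 / (2 * Real.pi) : ℝ)) •
        ∫ θ in (-Real.pi)..Real.pi,
          (Complex.exp (Complex.I * (n + 1) * θ) * ψ θ) • F (Complex.exp (Complex.I * θ)) := by
  have hψnC0 : IsC0 (fun θ : ℝ => Complex.exp (Complex.I * ((n:ℂ)+1) * (θ:ℂ)) * ψ θ) :=
    isC0_mul hψ n
  obtain ⟨M, hM⟩ := isCompact_Icc.exists_bound_of_continuousOn hψnC0.1
  have hinj : Function.Injective (fun j : ℕ => n - (j:ℤ)) := by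
    intro a b h
    simp only [sub_right_inj, Int.natCast_inj] at h
    exact h
  have habssum : Summable (fun j : ℕ => ‖(2*(Real.pi:ℂ)) * c (n - j)‖) := by
    have h1 : Summable (fun j : ℕ => ‖c (n - j)‖) := hc_sum.comp_injective hinj
    simpa [norm_mul, mul_assoc] using h1.mul_left ‖2*(Real.pi:ℂ)‖
  have hcoefint : ∀ j : ℕ, ∀ r : ℝ, 1 < r → (∫ θ in (-Real.pi)..Real.pi,
      (Complex.exp (Complex.I * ((n:ℂ)+1) * (θ:ℂ)) * ψ θ) *
        (((r:ℂ) * Complex.exp (Complex.I * θ)) ^ (j+1))⁻¹)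
      = ((r:ℂ) ^ (j+1))⁻¹ * ((2 * (Real.pi:ℂ)) * c (n - j)) := by
    intro j r _
    have hpt : ∀ θ : ℝ, (Complex.exp (Complex.I * ((n:ℂ)+1) * (θ:ℂ)) * ψ θ) *
        (((r:ℂ) * Complex.exp (Complex.I * θ)) ^ (j+1))⁻¹
        = ((r:ℂ) ^ (j+1))⁻¹ * (Complex.exp (Complex.I * ((n - j : ℤ) : ℂ) * θ) * ψ θ) := by
      intro θ
      have h1 : (Complex.exp (Complex.I * θ)) ^ (j+1)
          = Complex.exp (Complex.I * ((j:ℂ)+1) * θ) := by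
        rw [← Complex.exp_nat_mul]
        congr 1
        push_cast
        ring
      rw [mul_pow, h1, mul_inv, ← Complex.exp_neg]
      rw [show (Complex.exp (Complex.I * ((n:ℂ)+1) * (θ:ℂ)) * ψ θ) *
          (((r:ℂ)^(j+1))⁻¹ * Complex.exp (-(Complex.I * ((j:ℂ)+1) * θ)))
          = ((r:ℂ)^(j+1))⁻¹ * ((Complex.exp (Complex.I * ((n:ℂ)+1) * (θ:ℂ)) *
              Complex.exp (-(Complex.I * ((j:ℂ)+1) * θ))) * ψ θ) by ring]
      rw [← Complex.exp_add]
      congr 3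
      push_cast
      ring
    rw [intervalIntegral.integral_congr (fun θ _ => hpt θ)]
    rw [intervalIntegral.integral_const_mul]
    rw [hc (n - j)]
    have h2 : ((2:ℂ) * Real.pi) ≠ 0 := by simp [Real.pi_ne_zero]
    field_simp
  have hEq : (fun r : ℝ => ∫ θ in (-Real.pi)..Real.pi,
        (Complex.exp (Complex.I * ((n:ℂ)+1) * (θ:ℂ)) * ψ θ) •
          Gx x ((r:ℂ) * Complex.exp (Complex.I * θ)))
      =ᶠ[nhdsWithin 1 (Set.Ioi 1)] (fun r : ℝ =>
        ∑' j : ℕ, (((r:ℂ) ^ (j+1))⁻¹ * ((2 * (Real.pi:ℂ)) * c (n - j))) • x j) := by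
    filter_upwards [self_mem_nhdsWithin] with r hr
    exact hmain x hC hψnC0 hM _ (fun j s hs => hcoefint j s hs) hr
  have htend1 := hlimit x hC (fun j => (2 * (Real.pi:ℂ)) * c (n - j)) habssum
  have heq := tendsto_nhds_unique
    ((hFb _ hψnC0).congr' hEq) htend1
  have hsum2 : Summable (fun j : ℕ => c (n - j) • x j) := by
    refine Summable.of_norm_bounded (g := fun j => ‖c (n - j)‖ * C)
      ((hc_sum.comp_injective hinj).mul_right C) fun j => ?_
    rw [norm_smul]
    exact mul_le_mul_of_nonneg_left (hC j) (norm_nonneg _)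
  rw [show (∫ θ in (-Real.pi)..Real.pi,
      (Complex.exp (Complex.I * ((n:ℂ) + 1) * θ) * ψ θ) • F (Complex.exp (Complex.I * θ)))
      = ∑' j : ℕ, ((2 * (Real.pi:ℂ)) * c (n - j)) • x j from heq]
  have h3 : ∑' j : ℕ, ((2 * (Real.pi:ℂ)) * c (n - j)) • x j
      = (2 * (Real.pi:ℂ)) • ∑' j : ℕ, c (n - j) • x j := by
    rw [← Summable.tsum_const_smul _ hsum2]
    exact tsum_congr fun j => (smul_smul _ _ _).symm
  rw [h3, ← smul_assoc]
  have hs : ((1 / (2 * Real.pi) : ℝ)) • ((2:ℂ) * (Real.pi:ℂ)) = 1 := by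
    rw [Complex.real_smul]
    push_cast
    field_simp
  rw [show ((1 / (2 * Real.pi) : ℝ)) • (2 * (Real.pi:ℂ)) = 1 from hs, one_smul]

/-- **The convolution identity (equation (2.6) in the proof of Theorem 2.1 of
Seifert) and the Riemann–Lebesgue conclusion.**  If `Gx x` admits a boundary
function `F` and `ψ ∈ C₀(−π,π)` has absolutely summable Fourier coefficients
`c_m = (1/2π) ∫_{−π}^{π} e^{imθ} ψ(θ) dθ`, then for every `n ∈ ℤ`
`∑_{j ≥ 0} c_{n−j} x_j = (1/2π) ∫_{−π}^{π} e^{i(n+1)θ} ψ(θ) F(e^{iθ}) dθ`,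
and consequently this expression tends to `0` as `|n| → ∞`. -/
theorem stmt_14 {X : Type*} [NormedAddCommGroup X] [NormedSpace ℂ X] [CompleteSpace X]
    (x : ℕ → X) (hx_bdd : ∃ C : ℝ, ∀ n : ℕ, ‖x n‖ ≤ C)
    (F : ℂ → X) (hF : MemL1loc F) (hFb : IsBoundaryFun x F)
    (ψ : ℝ → ℂ) (hψ : IsC0 ψ) (c : ℤ → ℂ)
    (hc : ∀ m : ℤ, c m =
      (1 / (2 * Real.pi)) * ∫ θ in (-Real.pi)..Real.pi, Complex.exp (Complex.I * m * θ) * ψ θ)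
    (hc_sum : Summable (fun m : ℤ => ‖c m‖)) :
    (∀ n : ℤ, ∑' j : ℕ, c (n - (j : ℤ)) • x j =
      ((1 / (2 * Real.pi) : ℝ)) •
        ∫ θ in (-Real.pi)..Real.pi,
          (Complex.exp (Complex.I * (n + 1) * θ) * ψ θ) • F (Complex.exp (Complex.I * θ))) ∧
    Filter.Tendsto (fun n : ℤ => ∑' j : ℕ, c (n - (j : ℤ)) • x j)
      Filter.cofinite (nhds 0) := by
  obtain ⟨C, hC⟩ := hx_bdd
  have hkey := fun n : ℤ => key x hC F hFb ψ hψ c hc hc_sum n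
  refine ⟨hkey, ?_⟩
  have hππ : -Real.pi ≤ Real.pi := by linarith [Real.pi_pos]
  set g : ℝ → X := Set.indicator (Ioc (-Real.pi) Real.pi)
      (fun θ => ψ θ • F (Complex.exp (Complex.I * θ))) with hg
  have hRL := Real.tendsto_integral_exp_smul_cocompact g
  have hw : Tendsto (fun m : ℤ => -(((m:ℝ)+1) / (2*Real.pi))) cofinite (cocompact ℝ) := by
    have h0 : Tendsto (fun m : ℤ => ((m:ℝ))) cofinite (cocompact ℝ) := Int.tendsto_coe_cofinite
    have hhome : Tendsto (fun t : ℝ => -((t+1) / (2*Real.pi))) (cocompact ℝ) (cocompact ℝ) := by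
      have hne : (-(2*Real.pi)⁻¹ : ℝ) ≠ 0 := by
        simp [Real.pi_ne_zero]
      have ht : Tendsto (⇑((Homeomorph.addRight (1:ℝ)).trans
          (Homeomorph.mulRight₀ (-(2*Real.pi)⁻¹) hne))) (cocompact ℝ) (cocompact ℝ) :=
        le_of_eq (Homeomorph.map_cocompact _)
      refine ht.congr fun t => ?_
      show (t + 1) * -(2*Real.pi)⁻¹ = -((t+1) / (2*Real.pi))
      field_simp
    exact hhome.comp h0
  have hcomp := hRL.comp hw
  have hfin := hcomp.const_smul ((1 / (2*Real.pi) : ℝ))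
  rw [smul_zero] at hfin
  refine hfin.congr fun m => ?_
  rw [hkey m]
  show ((1 / (2*Real.pi) : ℝ)) •
      (∫ v : ℝ, 𝐞 (-(v * (-(((m:ℝ)+1) / (2*Real.pi))))) • g v) = _
  congr 1
  have hptw : ∀ v : ℝ, (𝐞 (-(v * (-(((m:ℝ)+1) / (2*Real.pi)))))) • g v
      = Set.indicator (Ioc (-Real.pi) Real.pi)
          (fun θ : ℝ => (Complex.exp (Complex.I * ((m:ℂ)+1) * θ) * ψ θ) •
            F (Complex.exp (Complex.I * θ))) v := by
    intro v
    rw [Circle.smul_def, Real.fourierChar_apply]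
    by_cases hv : v ∈ Ioc (-Real.pi) Real.pi
    · have harg : (2 * Real.pi * (-(v * (-(((m:ℝ)+1) / (2*Real.pi))))) : ℝ) = v * ((m:ℝ)+1) := by
        field_simp
      rw [harg, hg, Set.indicator_of_mem hv, Set.indicator_of_mem hv, smul_smul]
      congr 3
      push_cast
      ring
    · rw [hg, Set.indicator_of_notMem hv, Set.indicator_of_notMem hv, smul_zero]
  rw [show (fun v : ℝ => 𝐞 (-(v * (-(((m:ℝ)+1) / (2*Real.pi))))) • g v)
      = Set.indicator (Ioc (-Real.pi) Real.pi)
          (fun θ : ℝ => (Complex.exp (Complex.I * ((m:ℂ)+1) * θ) * ψ θ) •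
            F (Complex.exp (Complex.I * θ))) from funext hptw]
  rw [MeasureTheory.integral_indicator measurableSet_Ioc,
    ← intervalIntegral.integral_of_le hππ]
end

section
/- Let X be a complex Banach space, let x : ℕ → X be a sequence with M := sup_{n≥0} ‖∑_{j=0}^{n} x_j‖ < ∞, let ε ∈ (0,1], and let z : ℤ → ℂ and K > 0 be such that |z_n − z_{n−1}| ≤ K ε² for all n ∈ ℤ and |z_n − z_{n−1}| ≤ K/n² for all n ≠ 0. Then, writing s_j = ∑_{i=0}^{j} x_i, the series ∑_{j≥0} s_j (z_{n−j} − z_{n−j−1}) converges absolutely for every n ≥ 0 and ‖∑_{j≥0} s_j (z_{n−j} − z_{n−j−1})‖ ≤ 8 K M ε. -/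
open Filter Set

private lemma aux_key (a : ℝ) (ha : 2 ≤ a) : 1 / a ^ 2 ≤ 1 / (a - 1) - 1 / a := by
  rw [div_sub_div _ _ (by linarith) (by linarith), div_le_div_iff₀ (by positivity) (by nlinarith)]
  nlinarith

private lemma aux_sum (N : ℕ) (hN : 1 ≤ N) (a : ℕ) :
    ∑ j ∈ Finset.range a, (1 : ℝ) / ((j : ℝ) + N + 1) ^ 2 ≤ 1 / (N : ℝ) := by
  have hN' : (1 : ℝ) ≤ N := by exact_mod_cast hN
  set F : ℕ → ℝ := fun j => -(1 / ((j : ℝ) + N)) with hF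
  have key : ∀ j ∈ Finset.range a, (1 : ℝ) / ((j : ℝ) + N + 1) ^ 2 ≤ F (j + 1) - F j := by
    intro j _
    have hj0 : (0 : ℝ) ≤ (j : ℝ) := Nat.cast_nonneg j
    have h := aux_key ((j : ℝ) + N + 1) (by linarith)
    have e0 : (j : ℝ) + N + 1 - 1 = (j : ℝ) + N := by ring
    rw [e0] at h
    have e1 : F (j + 1) = -(1 / ((j : ℝ) + N + 1)) := by
      rw [hF]; push_cast; ring_nf
    have e2 : F j = -(1 / ((j : ℝ) + N)) := rfl
    rw [e1, e2]
    linarith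
  calc ∑ j ∈ Finset.range a, (1 : ℝ) / ((j : ℝ) + N + 1) ^ 2
      ≤ ∑ j ∈ Finset.range a, (F (j + 1) - F j) := Finset.sum_le_sum key
    _ = F a - F 0 := Finset.sum_range_sub F a
    _ ≤ 1 / (N : ℝ) := by
        have h1 : (0 : ℝ) < (a : ℝ) + N := by positivity
        have h2 : (0 : ℝ) ≤ 1 / ((a : ℝ) + N) := by positivity
        show -(1 / ((a : ℝ) + N)) - -(1 / (((0 : ℕ) : ℝ) + N)) ≤ 1 / (N : ℝ)
        simp only [Nat.cast_zero, zero_add]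
        linarith

private lemma aux_summable (N : ℕ) :
    Summable (fun j : ℕ => (1 : ℝ) / ((j : ℝ) + N + 1) ^ 2) := by
  have h : Summable (fun n : ℕ => 1 / (n : ℝ) ^ 2) :=
    Real.summable_one_div_nat_pow.mpr one_lt_two
  have h2 := (summable_nat_add_iff (N + 1)).mpr h
  refine h2.congr fun j => ?_
  push_cast
  ring_nf

/-- **The splitting estimate (2.4) in the proof of Theorem 2.1 of Seifert.**
If the partial sums `s_j = ∑_{i=0}^{j} x_i` are bounded by `M`, `ε ∈ (0,1]`, and
`z : ℤ → ℂ` satisfies `|z_n − z_{n−1}| ≤ K ε²` for all `n` and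
`|z_n − z_{n−1}| ≤ K/n²` for `n ≠ 0`, then the series
`∑_{j ≥ 0} (z_{n−j} − z_{n−j−1}) s_j` converges absolutely and has norm at most
`8 K M ε`. -/
theorem stmt_19 {X : Type*} [NormedAddCommGroup X] [NormedSpace ℂ X] [CompleteSpace X]
    (x : ℕ → X) (M : ℝ)
    (hM : ∀ n : ℕ, ‖∑ i ∈ Finset.range (n + 1), x i‖ ≤ M)
    (ε : ℝ) (hε : ε ∈ Set.Ioc (0 : ℝ) 1) (z : ℤ → ℂ) (K : ℝ) (hK : 0 < K)
    (hz_small : ∀ n : ℤ, ‖z n - z (n - 1)‖ ≤ K * ε ^ 2)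
    (hz_big : ∀ n : ℤ, n ≠ 0 → ‖z n - z (n - 1)‖ ≤ K / (n : ℝ) ^ 2) :
    ∀ n : ℕ,
      Summable (fun j : ℕ =>
        ‖(z ((n : ℤ) - j) - z ((n : ℤ) - j - 1)) • ∑ i ∈ Finset.range (j + 1), x i‖) ∧
      ‖∑' j : ℕ, (z ((n : ℤ) - j) - z ((n : ℤ) - j - 1)) • ∑ i ∈ Finset.range (j + 1), x i‖ ≤
        8 * K * M * ε := by
  obtain ⟨hε0, hε1⟩ := hε
  intro n
  set s : ℕ → X := fun j => ∑ i ∈ Finset.range (j + 1), x i with hs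
  set c : ℕ → ℝ := fun j => ‖z ((n : ℤ) - j) - z ((n : ℤ) - j - 1)‖ with hc
  have hM0 : 0 ≤ M := le_trans (norm_nonneg _) (hM 0)
  have hc_nonneg : ∀ j, 0 ≤ c j := fun j => norm_nonneg _
  have hterm : ∀ j : ℕ, ‖(z ((n : ℤ) - j) - z ((n : ℤ) - j - 1)) • s j‖ = c j * ‖s j‖ := by
    intro j; rw [norm_smul]
  have hsM : ∀ j, ‖s j‖ ≤ M := fun j => hM j
  have hterm_le : ∀ j : ℕ, ‖(z ((n : ℤ) - j) - z ((n : ℤ) - j - 1)) • s j‖ ≤ c j * M := by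
    intro j; rw [hterm j]; exact mul_le_mul_of_nonneg_left (hsM j) (hc_nonneg j)
  have hsmall : ∀ j, c j ≤ K * ε ^ 2 := fun j => hz_small _
  have hbig : ∀ j : ℕ, (j : ℤ) ≠ (n : ℤ) → c j ≤ K / ((n : ℝ) - j) ^ 2 := by
    intro j hj
    have h := hz_big ((n : ℤ) - j) (sub_ne_zero.mpr fun he => hj he.symm)
    have : ((((n : ℤ) - j : ℤ)) : ℝ) = (n : ℝ) - j := by push_cast; ring
    rwa [this] at h
  -- Summability of c
  have hc_sum : Summable c := by
    rw [← summable_nat_add_iff (n + 1)]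
    apply Summable.of_nonneg_of_le (fun j => hc_nonneg _) (fun j => ?_)
      ((aux_summable 0).mul_left K)
    have h1 : ((j + (n + 1) : ℕ) : ℤ) ≠ (n : ℤ) := by push_cast; omega
    refine (hbig _ h1).trans (le_of_eq ?_)
    rw [div_eq_mul_one_div]
    congr 2
    push_cast
    ring_nf
  have hcM_sum : Summable (fun j => c j * M) := hc_sum.mul_right M
  have hnorm_sum : Summable (fun j : ℕ =>
      ‖(z ((n : ℤ) - j) - z ((n : ℤ) - j - 1)) • s j‖) :=
    Summable.of_nonneg_of_le (fun j => norm_nonneg _) hterm_le hcM_sum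
  refine ⟨hnorm_sum, ?_⟩
  -- the floor
  set N := ⌊1 / ε⌋₊ with hNdef
  have h1ε : (1 : ℝ) ≤ 1 / ε := by rw [le_div_iff₀ hε0]; linarith
  have hN1 : 1 ≤ N := Nat.le_floor (by exact_mod_cast h1ε)
  have hN0 : (0 : ℝ) < N := by exact_mod_cast hN1
  have hNle : (N : ℝ) ≤ 1 / ε := Nat.floor_le (by positivity)
  have hinvN : (1 : ℝ) / N ≤ 2 * ε := by
    rcases le_or_gt ε (1 / 2) with h | h
    · have hf : 1 / ε - 1 < (N : ℝ) := Nat.sub_one_lt_floor (1 / ε)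
      have he2 : (0 : ℝ) < 2 * ε := by positivity
      have hhalf : (1 : ℝ) ≤ 1 / (2 * ε) := by
        rw [le_div_iff₀ he2]; linarith
      have hsum : 1 / ε = 1 / (2 * ε) + 1 / (2 * ε) := by
        field_simp; ring
      have h2 : 1 / (2 * ε) ≤ (N : ℝ) := by linarith
      rw [div_le_iff₀ hN0]
      have h3 := mul_le_mul_of_nonneg_left h2 he2.le
      have h4 : 2 * ε * (1 / (2 * ε)) = 1 := by field_simp
      linarith
    · have : (1 : ℝ) / N ≤ 1 := by
        rw [div_le_one hN0]; exact_mod_cast hN1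
      linarith
  -- bound on tsum of c
  have hc_tsum : ∑' j, c j ≤ 7 * K * ε := by
    have hsplit := Summable.sum_add_tsum_nat_add' (f := c) (k := n + N + 1)
      ((summable_nat_add_iff (n + N + 1)).mpr hc_sum)
    -- tail bound
    have htail : ∑' j : ℕ, c (j + (n + N + 1)) ≤ K * (1 / N) := by
      have hmaj : ∀ j : ℕ, c (j + (n + N + 1)) ≤ K * (1 / ((j : ℝ) + N + 1) ^ 2) := by
        intro j
        have h1 : ((j + (n + N + 1) : ℕ) : ℤ) ≠ (n : ℤ) := by push_cast; omega
        refine (hbig _ h1).trans (le_of_eq ?_)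
        rw [div_eq_mul_one_div]
        congr 2
        push_cast
        ring_nf
      calc ∑' j : ℕ, c (j + (n + N + 1))
          ≤ ∑' j : ℕ, K * (1 / ((j : ℝ) + N + 1) ^ 2) :=
            Summable.tsum_le_tsum hmaj ((summable_nat_add_iff (n + N + 1)).mpr hc_sum)
              ((aux_summable N).mul_left K)
        _ = K * ∑' j : ℕ, (1 : ℝ) / ((j : ℝ) + N + 1) ^ 2 := tsum_mul_left
        _ ≤ K * (1 / N) := by
            apply mul_le_mul_of_nonneg_left _ hK.le
            exact Real.tsum_le_of_sum_range_le (fun j => by positivity)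
              (fun m => aux_sum N hN1 m)
    -- finite part
    have hfin : ∑ j ∈ Finset.range (n + N + 1), c j ≤
        K * (1 / N) + (2 * (N : ℝ) + 1) * (K * ε ^ 2) := by
      have hsplit2 : ∑ j ∈ Finset.range (n + N + 1), c j =
          ∑ j ∈ Finset.range (n - N), c j + ∑ j ∈ Finset.Ico (n - N) (n + N + 1), c j := by
        rw [Finset.range_eq_Ico, ← Finset.sum_Ico_consecutive c (Nat.zero_le (n - N))
          (by omega : n - N ≤ n + N + 1), ← Finset.range_eq_Ico]
      rw [hsplit2]
      have hchunk1 : ∑ j ∈ Finset.range (n - N), c j ≤ K * (1 / N) := by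
        rcases Nat.lt_or_ge n (N + 1) with h | h
        · have h0 : n - N = 0 := by omega
          rw [h0]
          simp only [Finset.range_zero, Finset.sum_empty]
          positivity
        · set m := n - N with hm
          have hmn : (m : ℝ) = (n : ℝ) - N := by
            rw [hm, Nat.cast_sub (by omega : N ≤ n)]
          set F : ℕ → ℝ := fun j => K / ((n : ℝ) - j) with hF
          have key : ∀ j ∈ Finset.range m, c j ≤ F (j + 1) - F j := by
            intro j hj
            rw [Finset.mem_range] at hj
            have hjn : (j : ℝ) + 1 ≤ (m : ℝ) := by exact_mod_cast hj
            have hN' : (1 : ℝ) ≤ N := by exact_mod_cast hN1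
            have ha : (2 : ℝ) ≤ (n : ℝ) - j := by
              rw [hmn] at hjn; linarith
            have hbj : c j ≤ K / ((n : ℝ) - j) ^ 2 := by
              apply hbig
              intro he
              have : (j : ℝ) = (n : ℝ) := by exact_mod_cast he
              linarith
            have hk := aux_key ((n : ℝ) - j) ha
            have e1 : F (j + 1) = K / ((n : ℝ) - j - 1) := by
              rw [hF]; push_cast; ring_nf
            have e2 : F j = K / ((n : ℝ) - j) := rfl
            rw [e1, e2]
            have hKk : K * (1 / ((n : ℝ) - j) ^ 2) ≤
                K * (1 / ((n : ℝ) - j - 1) - 1 / ((n : ℝ) - j)) :=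
              mul_le_mul_of_nonneg_left hk hK.le
            rw [mul_one_div] at hKk
            rw [mul_sub, mul_one_div, mul_one_div] at hKk
            linarith
          have hsum := Finset.sum_range_sub F m
          have hnm : (n : ℝ) - m = (N : ℝ) := by rw [hmn]; ring
          have h0 : (1 : ℝ) ≤ (n : ℝ) := by exact_mod_cast (by omega : 1 ≤ n)
          calc ∑ j ∈ Finset.range m, c j
              ≤ ∑ j ∈ Finset.range m, (F (j + 1) - F j) := Finset.sum_le_sum key
            _ = F m - F 0 := hsum
            _ ≤ K * (1 / N) := by
                have e3 : F m = K / (N : ℝ) := by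
                  show K / ((n : ℝ) - m) = K / (N : ℝ)
                  rw [hnm]
                have e4 : F 0 = K / (n : ℝ) := by
                  show K / ((n : ℝ) - ((0 : ℕ) : ℝ)) = K / (n : ℝ)
                  norm_num
                rw [e3, e4, mul_one_div]
                have : (0 : ℝ) ≤ K / (n : ℝ) := by positivity
                linarith
      have hchunk2 : ∑ j ∈ Finset.Ico (n - N) (n + N + 1), c j ≤
          (2 * (N : ℝ) + 1) * (K * ε ^ 2) := by
        have hcard : (Finset.Ico (n - N) (n + N + 1)).card ≤ 2 * N + 1 := by
          rw [Nat.card_Ico]; omega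
        calc ∑ j ∈ Finset.Ico (n - N) (n + N + 1), c j
            ≤ (Finset.Ico (n - N) (n + N + 1)).card • (K * ε ^ 2) :=
              Finset.sum_le_card_nsmul _ _ _ (fun j _ => hsmall j)
          _ = ((Finset.Ico (n - N) (n + N + 1)).card : ℝ) * (K * ε ^ 2) := by
              rw [nsmul_eq_mul]
          _ ≤ (2 * (N : ℝ) + 1) * (K * ε ^ 2) := by
              apply mul_le_mul_of_nonneg_right _ (by positivity)
              exact_mod_cast hcard
      linarith
    have hnum1 : K * (1 / (N : ℝ)) ≤ 2 * K * ε := by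
      calc K * (1 / (N : ℝ)) ≤ K * (2 * ε) := mul_le_mul_of_nonneg_left hinvN hK.le
        _ = 2 * K * ε := by ring
    have hnum2 : (2 * (N : ℝ) + 1) * (K * ε ^ 2) ≤ 3 * K * ε := by
      have h2N : 2 * (N : ℝ) + 1 ≤ 3 / ε := by
        rw [div_eq_mul_one_div]
        linarith [hNle, h1ε]
      calc (2 * (N : ℝ) + 1) * (K * ε ^ 2) ≤ (3 / ε) * (K * ε ^ 2) := by
            apply mul_le_mul_of_nonneg_right h2N (by positivity)
        _ = 3 * K * ε := by field_simp
    linarith [hsplit, htail, hfin, hnum1, hnum2]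
  -- conclusion
  calc ‖∑' j : ℕ, (z ((n : ℤ) - j) - z ((n : ℤ) - j - 1)) • s j‖
      ≤ ∑' j : ℕ, ‖(z ((n : ℤ) - j) - z ((n : ℤ) - j - 1)) • s j‖ :=
        norm_tsum_le_tsum_norm hnorm_sum
    _ ≤ ∑' j : ℕ, c j * M := Summable.tsum_le_tsum hterm_le hnorm_sum hcM_sum
    _ = (∑' j : ℕ, c j) * M := tsum_mul_right
    _ ≤ (7 * K * ε) * M := mul_le_mul_of_nonneg_right hc_tsum hM0
    _ ≤ 8 * K * M * ε := by nlinarith [mul_nonneg (mul_nonneg hK.le hM0) hε0.le]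
end
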